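/- arXiv:1606.01793 — 3 statements merged into one kernel-verified Lean document; each statement's English description precedes it below -/
import Mathlib

section
/- Eckart–Young–Mirsky theorem for the Frobenius norm: for every real n×m matrix N with singular value decomposition N = U Σ Vᵀ and every integer 1 ≤ r ≤ min(n,m), the truncation M_r = U Σ_r Vᵀ (keeping only the r largest singular values) satisfies ‖N − M_r‖_F = min { ‖N − M‖_F : rank(M) ≤ r } = sqrt(Σ_{i>r} σᵢ(N)²). -/
open Matrix BigOperators Finset

/-- Singular values of a real `n × m` matrix, in nonincreasing order, 0-indexed:
`sv M 0 ≥ sv M 1 ≥ …` are the singular values (square roots of the eigenvalues of `Mᵀ M`). -/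
noncomputable def sv {n m : ℕ} (M : Matrix (Fin n) (Fin m) ℝ) (i : ℕ) : ℝ :=
  (((List.ofFn fun j : Fin m =>
      Real.sqrt ((Matrix.isHermitian_conjTranspose_mul_self M).eigenvalues j)).mergeSort
      (fun a b => decide (a ≥ b))).getD i 0)

/-- Trace inner product `⟨M, Y⟩ = tr (Mᵀ Y)`. -/
def ip {n m : ℕ} (M Y : Matrix (Fin n) (Fin m) ℝ) : ℝ := ∑ i, ∑ j, M i j * Y i j

/-- Frobenius norm. -/
noncomputable def fro {n m : ℕ} (M : Matrix (Fin n) (Fin m) ℝ) : ℝ :=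
  Real.sqrt (∑ i, ∑ j, M i j ^ 2)

/-- Truncated Frobenius norm `‖M‖_{F,r} = sqrt (σ₁² + ⋯ + σᵣ²)`. -/
noncomputable def truncFro {n m : ℕ} (r : ℕ) (M : Matrix (Fin n) (Fin m) ℝ) : ℝ :=
  Real.sqrt (∑ i ∈ Finset.range r, sv M i ^ 2)

/-- Dual norm with respect to the trace inner product. -/
noncomputable def dualNorm {n m : ℕ} (ν : Matrix (Fin n) (Fin m) ℝ → ℝ)
    (M : Matrix (Fin n) (Fin m) ℝ) : ℝ :=
  sSup {c : ℝ | ∃ Y, ν Y ≤ 1 ∧ c = ip M Y}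

/-- Low-rank inducing Frobenius norm `‖·‖_{F,r*}`, the dual of `‖·‖_{F,r}`. -/
noncomputable def lowRankFro {n m : ℕ} (r : ℕ) (M : Matrix (Fin n) (Fin m) ℝ) : ℝ :=
  dualNorm (truncFro r) M

/-- Ky Fan `r`-norm: sum of the `r` largest singular values. -/
noncomputable def kyFan {n m : ℕ} (r : ℕ) (M : Matrix (Fin n) (Fin m) ℝ) : ℝ :=
  ∑ i ∈ Finset.range r, sv M i

/-- Nuclear norm: sum of all singular values. -/
noncomputable def nuclear {n m : ℕ} (M : Matrix (Fin n) (Fin m) ℝ) : ℝ :=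
  ∑ i ∈ Finset.range (min n m), sv M i

lemma sv_nonneg {n m : ℕ} (M : Matrix (Fin n) (Fin m) ℝ) (i : ℕ) : 0 ≤ sv M i := by
  unfold sv
  set L := ((List.ofFn fun j : Fin m =>
      Real.sqrt ((Matrix.isHermitian_conjTranspose_mul_self M).eigenvalues j)).mergeSort
      (fun a b => decide (a ≥ b))) with hL
  by_cases h : i < L.length
  · rw [List.getD_eq_getElem L 0 h]
    obtain ⟨x, hx, hxe⟩ : ∃ x ∈ L, L[i] = x := ⟨L[i], List.getElem_mem h, rfl⟩
    rw [hxe]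
    rw [hL, List.mem_mergeSort, List.mem_ofFn] at hx
    obtain ⟨j, hj⟩ := hx
    rw [← hj]
    exact Real.sqrt_nonneg _
  · rw [List.getD_eq_default L 0 (le_of_not_gt h)]

lemma sv_anti {n m : ℕ} (M : Matrix (Fin n) (Fin m) ℝ) {i j : ℕ} (hij : i ≤ j) :
    sv M j ≤ sv M i := by
  rcases eq_or_lt_of_le hij with rfl | hij
  · exact le_rfl
  unfold sv
  set L := ((List.ofFn fun j : Fin m =>
      Real.sqrt ((Matrix.isHermitian_conjTranspose_mul_self M).eigenvalues j)).mergeSort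
      (fun a b => decide (a ≥ b))) with hL
  by_cases h : j < L.length
  · have hi : i < L.length := lt_trans hij h
    rw [List.getD_eq_getElem L 0 h, List.getD_eq_getElem L 0 hi]
    have hs := List.pairwise_mergeSort (le := fun a b : ℝ => decide (a ≥ b))
      (fun a b c h1 h2 => by simp_all; linarith) (fun a b => by simp [le_total, ge_iff_le])
      (List.ofFn fun j : Fin m =>
        Real.sqrt ((Matrix.isHermitian_conjTranspose_mul_self M).eigenvalues j))
    rw [List.pairwise_iff_getElem] at hs
    have := hs i j hi h hij
    simpa [hL] using this
  · rw [List.getD_eq_default L 0 (le_of_not_gt h)]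
    exact sv_nonneg M i

lemma exists_proj {n m : ℕ} (r : ℕ) (M : Matrix (Fin n) (Fin m) ℝ) (hrank : M.rank ≤ r)
    (hrm : r ≤ m) :
    ∃ P : Matrix (Fin m) (Fin m) ℝ, Pᵀ = P ∧ P * P = P ∧ M * P = 0 ∧
      (m : ℝ) - r ≤ Matrix.trace P := by
  classical
  let e := WithLp.linearEquiv 2 ℝ (Fin m → ℝ)
  let K : Submodule ℝ (EuclideanSpace ℝ (Fin m)) :=
    (LinearMap.ker M.mulVecLin).map (e.symm : (Fin m → ℝ) →ₗ[ℝ] EuclideanSpace ℝ (Fin m))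
  have hdimK : Module.finrank ℝ K = Module.finrank ℝ (LinearMap.ker M.mulVecLin) :=
    LinearEquiv.finrank_map_eq e.symm _
  have hdim : M.rank + Module.finrank ℝ (LinearMap.ker M.mulVecLin) = m := by
    have := LinearMap.finrank_range_add_finrank_ker M.mulVecLin
    simpa [Matrix.rank] using this
  let b := stdOrthonormalBasis ℝ K
  let v : Fin (Module.finrank ℝ K) → (Fin m → ℝ) := fun l i => ((b l : EuclideanSpace ℝ (Fin m))) i
  have hker : ∀ l, M.mulVec (v l) = 0 := by
    intro l
    have hb : ((b l : EuclideanSpace ℝ (Fin m))) ∈ K := (b l).2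
    obtain ⟨x, hx, hxe⟩ := hb
    have hvx : v l = x := funext fun i => by
      show ((b l : EuclideanSpace ℝ (Fin m))) i = x i
      rw [← hxe]; rfl
    rw [hvx]
    exact hx
  have horth : ∀ l k, (∑ i, v l i * v k i) = if l = k then 1 else 0 := by
    intro l k
    have h2 := (orthonormal_iff_ite.mp b.orthonormal) l k
    rw [Submodule.coe_inner, PiLp.inner_apply] at h2
    simp only [RCLike.inner_apply, conj_trivial] at h2
    exact (Finset.sum_congr rfl fun i _ => mul_comm _ _).trans h2
  refine ⟨Matrix.of fun i j => ∑ l, v l i * v l j, ?_, ?_, ?_, ?_⟩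
  · ext i j
    simp only [Matrix.transpose_apply, Matrix.of_apply]
    exact Finset.sum_congr rfl fun l _ => mul_comm _ _
  · ext i j
    show ∑ k, (∑ l, v l i * v l k) * ∑ l, v l k * v l j = ∑ l, v l i * v l j
    have h1 : ∀ k, (∑ l, v l i * v l k) * ∑ l', v l' k * v l' j
        = ∑ l, ∑ l', v l i * v l k * (v l' k * v l' j) := fun k => by
      rw [Finset.sum_mul_sum]
    rw [Finset.sum_congr rfl fun k _ => h1 k, Finset.sum_comm]
    refine Finset.sum_congr rfl fun l _ => ?_
    rw [Finset.sum_comm]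
    have h2 : ∀ l', ∑ k, v l i * v l k * (v l' k * v l' j)
        = v l i * v l' j * ∑ k, v l k * v l' k := fun l' => by
      rw [Finset.mul_sum]
      exact Finset.sum_congr rfl fun k _ => by ring
    rw [Finset.sum_congr rfl fun l' _ => h2 l',
      Finset.sum_congr rfl fun l' _ => by rw [horth l l']]
    simp
  · ext i j
    show ∑ k, M i k * ∑ l, v l k * v l j = 0
    have h1 : ∀ k, M i k * ∑ l, v l k * v l j = ∑ l, M i k * v l k * v l j := fun k => by
      rw [Finset.mul_sum]
      exact Finset.sum_congr rfl fun l _ => by ring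
    rw [Finset.sum_congr rfl fun k _ => h1 k, Finset.sum_comm]
    refine Finset.sum_eq_zero fun l _ => ?_
    have h0 : ∑ k, M i k * v l k = 0 := by
      have := congrFun (hker l) i
      simpa [Matrix.mulVec, dotProduct] using this
    rw [← Finset.sum_mul, h0, zero_mul]
  · unfold Matrix.trace
    have : ∑ i, Matrix.diag (Matrix.of fun i j => ∑ l, v l i * v l j) i
        = (Module.finrank ℝ K : ℝ) := by
      simp only [Matrix.diag_apply, Matrix.of_apply]
      rw [Finset.sum_comm]
      rw [Finset.sum_congr rfl fun l _ => horth l l]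
      simp
    rw [this]
    have h1 : (m : ℝ) = (M.rank : ℝ) + (Module.finrank ℝ (LinearMap.ker M.mulVecLin) : ℝ) := by
      rw [← Nat.cast_add, hdim]
    rw [hdimK, h1]
    have : (M.rank : ℝ) ≤ r := Nat.cast_le.mpr hrank
    linarith

lemma sum_ite_val {m : ℕ} (c : ℕ) (g : Fin m → ℝ) :
    ∑ k : Fin m, (if c = (k : ℕ) then g k else 0) = if h : c < m then g ⟨c, h⟩ else 0 := by
  by_cases h : c < m
  · rw [dif_pos h, Finset.sum_eq_single (⟨c, h⟩ : Fin m)]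
    · simp
    · intro k _ hk
      rw [if_neg]
      intro hck
      exact hk (by ext; simp [← hck])
    · simp
  · rw [dif_neg h]
    refine Finset.sum_eq_zero fun k _ => ?_
    rw [if_neg]
    intro hck
    exact h (hck ▸ k.isLt)

lemma cheby {k r : ℕ} (hrk : r ≤ k) (s w : ℕ → ℝ)
    (hs : ∀ i j, i ≤ j → j < k → s j ≤ s i) (hs0 : ∀ i, i < k → 0 ≤ s i)
    (hw0 : ∀ i, 0 ≤ w i) (hw1 : ∀ i, w i ≤ 1)
    (hwsum : (k : ℝ) - r ≤ ∑ i ∈ Finset.range k, w i) :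
    ∑ i ∈ Finset.Ico r k, s i ≤ ∑ i ∈ Finset.range k, s i * w i := by
  rcases eq_or_lt_of_le hrk with rfl | hrlt
  · simp only [Finset.Ico_self, Finset.sum_empty]
    exact Finset.sum_nonneg fun i hi =>
      mul_nonneg (hs0 i (Finset.mem_range.mp hi)) (hw0 i)
  have hsr0 : 0 ≤ s r := hs0 r hrlt
  have hsplit : Finset.range k = Finset.range r ∪ Finset.Ico r k := by
    rw [Finset.range_eq_Ico, Finset.range_eq_Ico, Finset.Ico_union_Ico_eq_Ico (Nat.zero_le r) hrk]
  have hdisj : Disjoint (Finset.range r) (Finset.Ico r k) := by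
    simp [Finset.disjoint_left, Finset.mem_range, Finset.mem_Ico]
    omega
  rw [hsplit, Finset.sum_union hdisj]
  have hw_split : ∑ i ∈ Finset.range k, w i
      = ∑ i ∈ Finset.range r, w i + ∑ i ∈ Finset.Ico r k, w i := by
    rw [hsplit, Finset.sum_union hdisj]
  -- lower bound on first part
  have h1 : s r * ∑ i ∈ Finset.range r, w i ≤ ∑ i ∈ Finset.range r, s i * w i := by
    rw [Finset.mul_sum]
    refine Finset.sum_le_sum fun i hi => ?_
    exact mul_le_mul_of_nonneg_right (hs i r (le_of_lt (Finset.mem_range.mp hi)) hrlt) (hw0 i)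
  -- upper bound on tail deficit
  have h2 : ∑ i ∈ Finset.Ico r k, s i - ∑ i ∈ Finset.Ico r k, s i * w i
      ≤ s r * ((k : ℝ) - r - ∑ i ∈ Finset.Ico r k, w i) := by
    have hcard : ((Finset.Ico r k).card : ℝ) = (k : ℝ) - r := by
      rw [Nat.card_Ico]
      push_cast [Nat.cast_sub hrk]
      ring
    rw [← Finset.sum_sub_distrib, ← hcard]
    have : s r * (((Finset.Ico r k).card : ℝ) - ∑ i ∈ Finset.Ico r k, w i)
        = ∑ i ∈ Finset.Ico r k, s r * (1 - w i) := by
      simp only [mul_one_sub, Finset.sum_sub_distrib, Finset.sum_const, nsmul_eq_mul,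
        ← Finset.mul_sum]
      ring
    rw [this]
    refine Finset.sum_le_sum fun i hi => ?_
    obtain ⟨hri, hik⟩ := Finset.mem_Ico.mp hi
    have : s i - s i * w i = s i * (1 - w i) := by ring
    rw [this]
    exact mul_le_mul_of_nonneg_right (hs r i hri hik) (by linarith [hw1 i])
  have h3 : s r * ((k : ℝ) - r - ∑ i ∈ Finset.Ico r k, w i)
      ≤ s r * ∑ i ∈ Finset.range r, w i := by
    refine mul_le_mul_of_nonneg_left ?_ hsr0
    linarith [hw_split, hwsum]
  linarith

lemma sqsum_eq_trace {n m : ℕ} (A : Matrix (Fin n) (Fin m) ℝ) :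
    ∑ i, ∑ j, A i j ^ 2 = Matrix.trace (Aᵀ * A) := by
  rw [Matrix.trace]
  rw [Finset.sum_comm]
  refine Finset.sum_congr rfl fun i _ => ?_
  simp [Matrix.diag_apply, Matrix.mul_apply, pow_two]

lemma trace_transpose_mul_nonneg {n m : ℕ} (A : Matrix (Fin n) (Fin m) ℝ) :
    0 ≤ Matrix.trace (Aᵀ * A) := by
  rw [← sqsum_eq_trace]
  exact Finset.sum_nonneg fun i _ => Finset.sum_nonneg fun j _ => sq_nonneg _

lemma fro_eq_sqrt_trace {n m : ℕ} (A : Matrix (Fin n) (Fin m) ℝ) :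
    fro A = Real.sqrt (Matrix.trace (Aᵀ * A)) := by
  rw [fro, sqsum_eq_trace]

/-- Orthogonal invariance of the squared Frobenius norm. -/
lemma trace_conj {n m : ℕ} (U : Matrix (Fin n) (Fin n) ℝ) (V : Matrix (Fin m) (Fin m) ℝ)
    (hU : Uᵀ * U = 1) (hV : Vᵀ * V = 1) (B : Matrix (Fin n) (Fin m) ℝ) :
    Matrix.trace ((U * B * Vᵀ)ᵀ * (U * B * Vᵀ)) = Matrix.trace (Bᵀ * B) := by
  have : (U * B * Vᵀ)ᵀ * (U * B * Vᵀ) = V * (Bᵀ * B) * Vᵀ := by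
    rw [Matrix.transpose_mul, Matrix.transpose_mul, Matrix.transpose_transpose]
    simp only [← Matrix.mul_assoc]
    rw [Matrix.mul_assoc (V * Bᵀ), hU, Matrix.mul_one]
  rw [this, Matrix.trace_mul_comm, ← Matrix.mul_assoc, hV, Matrix.one_mul]

lemma key_lb {n m r : ℕ} (hr2 : r ≤ min n m)
    (N : Matrix (Fin n) (Fin m) ℝ)
    (U : Matrix (Fin n) (Fin n) ℝ) (V : Matrix (Fin m) (Fin m) ℝ)
    (hU2 : Uᵀ * U = 1) (hV1 : V * Vᵀ = 1)
    (hN : N = U * (Matrix.of fun (i : Fin n) (j : Fin m) =>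
      if (i : ℕ) = (j : ℕ) then sv N (i : ℕ) else 0) * Vᵀ)
    (M : Matrix (Fin n) (Fin m) ℝ) (hM : M.rank ≤ r) :
    ∑ i ∈ Finset.Ico r (min n m), sv N i ^ 2 ≤ Matrix.trace ((N - M)ᵀ * (N - M)) := by
  classical
  obtain ⟨P, hPt, hPP, hMP, htrP⟩ :=
    exists_proj r M hM (le_trans hr2 (min_le_right n m))
  set S : Matrix (Fin n) (Fin m) ℝ := (Matrix.of fun (i : Fin n) (j : Fin m) =>
      if (i : ℕ) = (j : ℕ) then sv N (i : ℕ) else 0) with hS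
  set A := N - M with hA
  set B := A * P with hB
  set C := A * (1 - P) with hC
  have h1P : (1 - P) * P = 0 := by
    rw [Matrix.sub_mul, Matrix.one_mul, hPP, sub_self]
  have hcross : Matrix.trace (Bᵀ * C) = 0 := by
    have h : Bᵀ * C = (P * Aᵀ) * (A * (1 - P)) := by
      rw [hB, Matrix.transpose_mul, hPt]
    rw [h, Matrix.trace_mul_comm,
      show (A * (1 - P)) * (P * Aᵀ) = A * (((1 - P) * P) * Aᵀ) by
        simp only [Matrix.mul_assoc],
      h1P, Matrix.zero_mul, Matrix.mul_zero, Matrix.trace_zero]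
  have hcross2 : Matrix.trace (Cᵀ * B) = 0 := by
    rw [← Matrix.trace_transpose (Cᵀ * B), Matrix.transpose_mul, Matrix.transpose_transpose,
      hcross]
  have hsum : A = B + C := by
    rw [hB, hC, Matrix.mul_sub, Matrix.mul_one]
    abel
  have hexpand : Matrix.trace (Aᵀ * A)
      = Matrix.trace (Bᵀ * B) + Matrix.trace (Cᵀ * C) := by
    calc Matrix.trace (Aᵀ * A) = Matrix.trace ((B + C)ᵀ * (B + C)) := by rw [← hsum]
      _ = Matrix.trace (Bᵀ * B) + Matrix.trace (Bᵀ * C) + Matrix.trace (Cᵀ * B)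
          + Matrix.trace (Cᵀ * C) := by
        rw [Matrix.transpose_add, Matrix.add_mul, Matrix.mul_add, Matrix.mul_add,
          Matrix.trace_add, Matrix.trace_add, Matrix.trace_add]
        ring
      _ = _ := by rw [hcross, hcross2]; ring
  have hBNP : B = N * P := by
    rw [hB, hA, Matrix.sub_mul, hMP, sub_zero]
  -- trace (Bᵀ * B) = trace (Sᵀ * S * Q) where Q = Vᵀ * P * V
  set Q := Vᵀ * P * V with hQ
  have hQt : Qᵀ = Q := by
    rw [hQ, Matrix.transpose_mul, Matrix.transpose_mul, Matrix.transpose_transpose, hPt,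
      Matrix.mul_assoc]
  have hQQ : Q * Q = Q := by
    rw [hQ, show Vᵀ * P * V * (Vᵀ * P * V) = Vᵀ * (P * (V * Vᵀ) * P) * V by
      simp only [Matrix.mul_assoc], hV1, Matrix.mul_one, hPP]
  have htrQ : Matrix.trace Q = Matrix.trace P := by
    rw [hQ, Matrix.mul_assoc, Matrix.trace_mul_comm, Matrix.mul_assoc, hV1, Matrix.mul_one]
  have hNtN : Nᵀ * N = V * (Sᵀ * S) * Vᵀ := by
    rw [hN]
    rw [Matrix.transpose_mul, Matrix.transpose_mul, Matrix.transpose_transpose]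
    simp only [← Matrix.mul_assoc]
    rw [Matrix.mul_assoc (V * Sᵀ), hU2, Matrix.mul_one]
  have htrBB : Matrix.trace (Bᵀ * B) = Matrix.trace (Sᵀ * S * Q) := by
    rw [hBNP, Matrix.transpose_mul, hPt]
    calc Matrix.trace (P * Nᵀ * (N * P))
        = Matrix.trace ((Nᵀ * N) * (P * P)) := by
          rw [Matrix.mul_assoc, Matrix.trace_mul_comm]
          simp only [Matrix.mul_assoc]
      _ = Matrix.trace ((Nᵀ * N) * P) := by rw [hPP]
      _ = Matrix.trace (Sᵀ * S * Q) := by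
          rw [hNtN, hQ]
          simp only [Matrix.mul_assoc]
          rw [Matrix.trace_mul_comm V (Sᵀ * (S * (Vᵀ * P)))]
          simp only [Matrix.mul_assoc]
  -- diagonal entries of Q are in [0,1]
  have hQdiag : ∀ j, 0 ≤ Q j j ∧ Q j j ≤ 1 := by
    intro j
    have hQsq : Q j j = ∑ k, Q j k ^ 2 := by
      conv_lhs => rw [← hQQ]
      rw [Matrix.mul_apply]
      refine Finset.sum_congr rfl fun k _ => ?_
      have hsym : Q k j = Q j k := congrFun (congrFun hQt j) k
      rw [hsym, pow_two]
    have h0 : 0 ≤ Q j j := by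
      rw [hQsq]; exact Finset.sum_nonneg fun k _ => sq_nonneg _
    refine ⟨h0, ?_⟩
    have hle : Q j j ^ 2 ≤ Q j j := by
      have h := Finset.single_le_sum (f := fun k => Q j k ^ 2)
        (fun k _ => sq_nonneg _) (Finset.mem_univ j)
      rw [← hQsq] at h
      exact h
    nlinarith
  -- compute Sᵀ * S
  have hD : Sᵀ * S = Matrix.of (fun j k : Fin m =>
      if (j : ℕ) = (k : ℕ) ∧ (j : ℕ) < n then sv N (j : ℕ) ^ 2 else 0) := by
    ext j k
    show ∑ i : Fin n, S i j * S i k = _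
    have hterm : ∀ i : Fin n,
        S i j * S i k
        = if (j : ℕ) = (i : ℕ) then (if (j : ℕ) = (k : ℕ) then sv N (j : ℕ) ^ 2 else 0)
          else 0 := by
      intro i
      show (if (i : ℕ) = (j : ℕ) then sv N (i : ℕ) else 0)
          * (if (i : ℕ) = (k : ℕ) then sv N (i : ℕ) else 0) = _
      by_cases h1 : (i : ℕ) = (j : ℕ)
      · rw [if_pos h1, if_pos h1.symm, h1]
        by_cases h2 : (j : ℕ) = (k : ℕ)
        · rw [if_pos h2, if_pos h2, pow_two]
        · rw [if_neg h2, if_neg h2, mul_zero]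
      · rw [if_neg h1, zero_mul, if_neg (fun h => h1 (Eq.symm h))]
    rw [Finset.sum_congr rfl fun i _ => hterm i, sum_ite_val (j : ℕ)
      (fun _ => if (j : ℕ) = (k : ℕ) then sv N (j : ℕ) ^ 2 else 0)]
    simp only [Matrix.of_apply]
    split_ifs with h1 h2 h3 h4 <;> first | rfl | omega | (exfalso; omega) | tauto
  -- trace of Sᵀ S Q
  have htrDQ : Matrix.trace (Sᵀ * S * Q)
      = ∑ j : Fin m, (if (j : ℕ) < n then sv N (j : ℕ) ^ 2 * Q j j else 0) := by
    rw [Matrix.trace]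
    refine Finset.sum_congr rfl fun j _ => ?_
    rw [Matrix.diag_apply, Matrix.mul_apply, hD]
    have hterm : ∀ k : Fin m,
        (Matrix.of (fun j k : Fin m =>
          if (j : ℕ) = (k : ℕ) ∧ (j : ℕ) < n then sv N (j : ℕ) ^ 2 else 0)) j k * Q k j
        = if (j : ℕ) = (k : ℕ)
          then (if (j : ℕ) < n then sv N (j : ℕ) ^ 2 * Q k j else 0) else 0 := by
      intro k
      simp only [Matrix.of_apply]
      by_cases hjk : (j : ℕ) = (k : ℕ)
      · by_cases hn : (j : ℕ) < n
        · rw [if_pos ⟨hjk, hn⟩, if_pos hjk, if_pos hn]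
        · rw [if_neg (fun h => hn h.2), if_pos hjk, if_neg hn, zero_mul]
      · rw [if_neg (fun h => hjk h.1), if_neg hjk, zero_mul]
    rw [Finset.sum_congr rfl fun k _ => hterm k, sum_ite_val (j : ℕ)
      (fun k => if (j : ℕ) < n then sv N (j : ℕ) ^ 2 * Q k j else 0), dif_pos j.isLt]
  -- apply the rearrangement inequality
  set w : ℕ → ℝ := fun i => if h : i < m then Q ⟨i, h⟩ ⟨i, h⟩ else 0 with hw
  have hw0 : ∀ i, 0 ≤ w i := by
    intro i
    rw [hw]
    dsimp only
    split
    · exact (hQdiag _).1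
    · exact le_refl 0
  have hw1 : ∀ i, w i ≤ 1 := by
    intro i
    rw [hw]
    dsimp only
    split
    · exact (hQdiag _).2
    · exact zero_le_one
  have htrQw : Matrix.trace Q = ∑ i ∈ Finset.range m, w i := by
    rw [Matrix.trace, ← Fin.sum_univ_eq_sum_range]
    refine Finset.sum_congr rfl fun j _ => ?_
    rw [Matrix.diag_apply, hw]
    dsimp only
    rw [dif_pos j.isLt]
  have hwsum : ((min n m : ℕ) : ℝ) - r ≤ ∑ i ∈ Finset.range (min n m), w i := by
    have hmle : min n m ≤ m := min_le_right n m
    have hsplit : Finset.range m = Finset.range (min n m) ∪ Finset.Ico (min n m) m := by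
      rw [Finset.range_eq_Ico, Finset.range_eq_Ico, Finset.Ico_union_Ico_eq_Ico (Nat.zero_le _) hmle]
    have hdisj : Disjoint (Finset.range (min n m)) (Finset.Ico (min n m) m) := by
      simp [Finset.disjoint_left, Finset.mem_range, Finset.mem_Ico]
      omega
    have h2 : ∑ i ∈ Finset.Ico (min n m) m, w i ≤ ((m - min n m : ℕ) : ℝ) := by
      calc ∑ i ∈ Finset.Ico (min n m) m, w i
          ≤ ∑ i ∈ Finset.Ico (min n m) m, (1 : ℝ) :=
            Finset.sum_le_sum fun i _ => hw1 i
        _ = ((m - min n m : ℕ) : ℝ) := by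
            rw [Finset.sum_const, Nat.card_Ico, nsmul_eq_mul, mul_one]
    have h3 : (m : ℝ) - r ≤ ∑ i ∈ Finset.range m, w i := htrQw ▸ htrQ ▸ htrP
    have h4 : ∑ i ∈ Finset.range m, w i
        = ∑ i ∈ Finset.range (min n m), w i + ∑ i ∈ Finset.Ico (min n m) m, w i := by
      rw [hsplit, Finset.sum_union hdisj]
    have h5 : ((m - min n m : ℕ) : ℝ) = (m : ℝ) - ((min n m : ℕ) : ℝ) := by
      push_cast [Nat.cast_sub hmle]
      ring
    rw [h5] at h2
    linarith
  have hs_anti : ∀ i j : ℕ, i ≤ j → j < min n m → sv N j ^ 2 ≤ sv N i ^ 2 := by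
    intro i j hij _
    exact pow_le_pow_left₀ (sv_nonneg N j) (sv_anti N hij) 2
  have hcheby := cheby hr2 (fun i => sv N i ^ 2) w hs_anti
    (fun i _ => sq_nonneg _) hw0 hw1 hwsum
  -- identify ∑ s * w with the trace
  have hid : ∑ i ∈ Finset.range (min n m), sv N i ^ 2 * w i
      = ∑ j : Fin m, (if (j : ℕ) < n then sv N (j : ℕ) ^ 2 * Q j j else 0) := by
    have hfin : ∑ j : Fin m, (if (j : ℕ) < n then sv N (j : ℕ) ^ 2 * Q j j else 0)
        = ∑ i ∈ Finset.range m, (if i < n then sv N i ^ 2 * w i else 0) := by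
      rw [← Fin.sum_univ_eq_sum_range]
      refine Finset.sum_congr rfl fun j _ => ?_
      rw [hw]
      dsimp only
      rw [dif_pos j.isLt]
    rw [hfin]
    rw [← Finset.sum_subset (Finset.range_subset_range.mpr (min_le_right n m))]
    · refine Finset.sum_congr rfl fun i hi => ?_
      rw [if_pos (lt_of_lt_of_le (Finset.mem_range.mp hi) (min_le_left n m))]
    · intro i hi hni
      rw [Finset.mem_range] at hi hni
      rw [if_neg]
      omega
  -- final chain
  calc ∑ i ∈ Finset.Ico r (min n m), sv N i ^ 2
      ≤ ∑ i ∈ Finset.range (min n m), sv N i ^ 2 * w i := hcheby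
    _ = Matrix.trace (Sᵀ * S * Q) := by rw [hid, htrDQ]
    _ = Matrix.trace (Bᵀ * B) := htrBB.symm
    _ ≤ Matrix.trace (Aᵀ * A) := by
        have := trace_transpose_mul_nonneg C
        linarith [hexpand]

/-- Eckart–Young–Mirsky, Frobenius norm: if `N = U Σ Vᵀ` is an SVD and
`M_r = U Σ_r Vᵀ` keeps only the `r` largest singular values, then
`‖N − M_r‖_F = min {‖N − M‖_F : rank M ≤ r} = sqrt (Σ_{i>r} σᵢ(N)²)`. -/
theorem eckart_young_mirsky {n m r : ℕ} (hr1 : 1 ≤ r) (hr2 : r ≤ min n m)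
    (N : Matrix (Fin n) (Fin m) ℝ)
    (U : Matrix (Fin n) (Fin n) ℝ) (V : Matrix (Fin m) (Fin m) ℝ)
    (hU : U * Uᵀ = 1 ∧ Uᵀ * U = 1) (hV : V * Vᵀ = 1 ∧ Vᵀ * V = 1)
    (hN : N = U * (Matrix.of fun (i : Fin n) (j : Fin m) =>
      if (i : ℕ) = (j : ℕ) then sv N (i : ℕ) else 0) * Vᵀ)
    (Mr : Matrix (Fin n) (Fin m) ℝ)
    (hMr : Mr = U * (Matrix.of fun (i : Fin n) (j : Fin m) =>
      if (i : ℕ) = (j : ℕ) ∧ (i : ℕ) < r then sv N (i : ℕ) else 0) * Vᵀ) :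
    fro (N - Mr) = sInf {c : ℝ | ∃ M : Matrix (Fin n) (Fin m) ℝ, M.rank ≤ r ∧ c = fro (N - M)} ∧
    fro (N - Mr) = Real.sqrt (∑ i ∈ Finset.Ico r (min n m), sv N i ^ 2) := by
  classical
  set S : Matrix (Fin n) (Fin m) ℝ := (Matrix.of fun (i : Fin n) (j : Fin m) =>
      if (i : ℕ) = (j : ℕ) then sv N (i : ℕ) else 0) with hS
  set Sr : Matrix (Fin n) (Fin m) ℝ := (Matrix.of fun (i : Fin n) (j : Fin m) =>
      if (i : ℕ) = (j : ℕ) ∧ (i : ℕ) < r then sv N (i : ℕ) else 0) with hSr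
  set E : Matrix (Fin n) (Fin m) ℝ := (Matrix.of fun (i : Fin n) (j : Fin m) =>
      if (i : ℕ) = (j : ℕ) ∧ r ≤ (i : ℕ) then sv N (i : ℕ) else 0) with hE
  -- N - Mr = U * E * Vᵀ
  have hdiff : N - Mr = U * E * Vᵀ := by
    rw [hN, hMr, ← Matrix.sub_mul, ← Matrix.mul_sub]
    congr 2
    ext i j
    simp only [Matrix.sub_apply, hS, hSr, hE, Matrix.of_apply]
    split_ifs <;> first | ring1 | (exfalso; omega)
  -- squared Frobenius norm of the truncation error
  have htr : Matrix.trace ((N - Mr)ᵀ * (N - Mr)) = ∑ i ∈ Finset.Ico r (min n m), sv N i ^ 2 := by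
    rw [hdiff, trace_conj U V hU.2 hV.2, ← sqsum_eq_trace]
    have hrow : ∀ i : Fin n, ∑ j, E i j ^ 2
        = (fun i : ℕ => if i < m ∧ r ≤ i then sv N i ^ 2 else 0) (i : ℕ) := by
      intro i
      have hterm : ∀ j : Fin m, E i j ^ 2
          = if (i : ℕ) = (j : ℕ) then (if r ≤ (i : ℕ) then sv N (i : ℕ) ^ 2 else 0) else 0 := by
        intro j
        rw [hE]
        simp only [Matrix.of_apply]
        by_cases h1 : (i : ℕ) = (j : ℕ)
        · by_cases h2 : r ≤ (i : ℕ)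
          · rw [if_pos ⟨h1, h2⟩, if_pos h1, if_pos h2]
          · rw [if_neg (fun h => h2 h.2), if_pos h1, if_neg h2]
            ring
        · rw [if_neg (fun h => h1 h.1), if_neg h1]
          ring
      rw [Finset.sum_congr rfl fun j _ => hterm j, sum_ite_val (i : ℕ)
        (fun _ => if r ≤ (i : ℕ) then sv N (i : ℕ) ^ 2 else 0)]
      dsimp only
      split_ifs <;> first | rfl | omega
    rw [Finset.sum_congr rfl fun i _ => hrow i, Fin.sum_univ_eq_sum_range
      (fun i : ℕ => if i < m ∧ r ≤ i then sv N i ^ 2 else 0) n]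
    rw [← Finset.sum_subset (show Finset.Ico r (min n m) ⊆ Finset.range n by
      intro x hx
      rw [Finset.mem_Ico] at hx
      rw [Finset.mem_range]
      omega)]
    · refine Finset.sum_congr rfl fun i hi => ?_
      rw [Finset.mem_Ico] at hi
      rw [if_pos ⟨by omega, hi.1⟩]
    · intro x hx hnx
      rw [Finset.mem_range] at hx
      rw [Finset.mem_Ico] at hnx
      exact if_neg (by omega)
  have hsq_nonneg := trace_transpose_mul_nonneg (N - Mr)
  have hfroMr : fro (N - Mr) = Real.sqrt (∑ i ∈ Finset.Ico r (min n m), sv N i ^ 2) := by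
    rw [fro_eq_sqrt_trace, htr]
  -- rank of Mr
  have hrankMr : Mr.rank ≤ r := by
    set A0 : Matrix (Fin n) (Fin r) ℝ := (Matrix.of fun (i : Fin n) (l : Fin r) =>
      if (i : ℕ) = (l : ℕ) then sv N (i : ℕ) else 0) with hA0
    set B0 : Matrix (Fin r) (Fin m) ℝ := (Matrix.of fun (l : Fin r) (j : Fin m) =>
      if (l : ℕ) = (j : ℕ) then (1 : ℝ) else 0) with hB0
    have hfact : Sr = A0 * B0 := by
      ext i j
      rw [hSr, Matrix.mul_apply]
      have hterm : ∀ l : Fin r, A0 i l * B0 l j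
          = if (i : ℕ) = (l : ℕ) then (if (i : ℕ) = (j : ℕ) then sv N (i : ℕ) else 0) else 0 := by
        intro l
        rw [hA0, hB0]
        simp only [Matrix.of_apply]
        split_ifs <;> first | ring1 | (exfalso; omega)
      rw [Finset.sum_congr rfl fun l _ => hterm l, sum_ite_val (i : ℕ)
        (fun _ => if (i : ℕ) = (j : ℕ) then sv N (i : ℕ) else 0)]
      dsimp only [Matrix.of_apply]
      split_ifs <;> first | rfl | omega | tauto
    have hMrfact : Mr = (U * A0) * (B0 * Vᵀ) := by
      rw [hMr, hfact]
      simp only [Matrix.mul_assoc]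
    rw [hMrfact]
    calc ((U * A0) * (B0 * Vᵀ)).rank ≤ (U * A0).rank := Matrix.rank_mul_le_left _ _
      _ ≤ r := Matrix.rank_le_width _
  -- the infimum
  set T : Set ℝ := {c : ℝ | ∃ M : Matrix (Fin n) (Fin m) ℝ, M.rank ≤ r ∧ c = fro (N - M)}
    with hT
  have hmem : fro (N - Mr) ∈ T := ⟨Mr, hrankMr, rfl⟩
  have hlb : ∀ c ∈ T, fro (N - Mr) ≤ c := by
    rintro c ⟨M, hMrank, rfl⟩
    rw [hfroMr, fro_eq_sqrt_trace]
    exact Real.sqrt_le_sqrt (key_lb hr2 N U V hU.2 hV.1 hN M hMrank)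
  refine ⟨le_antisymm (le_csInf ⟨_, hmem⟩ hlb) (csInf_le ⟨_, hlb⟩ hmem), hfroMr⟩
end

section
/- For any two real n×m matrices M and N, tr(MᵀN) ≤ Σᵢ σᵢ(M) σᵢ(N), where the singular values are arranged in nonincreasing order (von Neumann trace inequality). -/
open Matrix BigOperators Finset

section SortedTuple
variable {m : ℕ} (σ : Fin m → ℝ)

/-- the descending-sort permutation -/
noncomputable def descPerm : Equiv.Perm (Fin m) := Tuple.sort (fun i => -σ i)

lemma antitone_comp_descPerm : Antitone (σ ∘ descPerm σ) := by
  have h := Tuple.monotone_sort (fun i => -σ i)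
  intro i j hij
  have := h hij
  simp only [Function.comp_apply] at this ⊢
  dsimp [descPerm]
  linarith

lemma mergeSort_ofFn_eq :
    (List.ofFn σ).mergeSort (fun a b => decide (a ≥ b)) = List.ofFn (σ ∘ descPerm σ) := by
  refine (fun hp h1 h2 => List.Perm.eq_of_pairwise (le := fun a b : ℝ => a ≥ b)
    (fun a b _ _ h1 h2 => le_antisymm h2 h1) h1 h2 hp) ?_ ?_ ?_
  · exact ((List.ofFn σ).mergeSort_perm _).trans (Equiv.Perm.ofFn_comp_perm (descPerm σ) σ).symm
  · have := List.pairwise_mergeSort (le := fun a b : ℝ => decide (a ≥ b))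
      (fun a b c h₁ h₂ => by simp at *; linarith)
      (fun a b => by simpa using le_total b a) (List.ofFn σ)
    simpa using this
  · rw [List.pairwise_ofFn]
    intro i j hij
    exact antitone_comp_descPerm σ hij.le

/-- generic sorted getter -/
noncomputable def sorted (i : ℕ) : ℝ :=
  ((List.ofFn σ).mergeSort (fun a b => decide (a ≥ b))).getD i 0

lemma sorted_eq (i : Fin m) : sorted σ i = σ (descPerm σ i) := by
  rw [sorted, mergeSort_ofFn_eq]
  rw [List.getD_eq_getElem?_getD]
  simp [List.getElem?_ofFn, i.isLt]

lemma sorted_eq_zero (i : ℕ) (hi : m ≤ i) : sorted σ i = 0 := by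
  rw [sorted, List.getD_eq_getElem?_getD, List.getElem?_eq_none]
  · rfl
  · simpa [List.length_mergeSort] using hi

lemma sorted_nonneg (hσ : ∀ j, 0 ≤ σ j) (i : ℕ) : 0 ≤ sorted σ i := by
  by_cases h : i < m
  · rw [show i = ((⟨i, h⟩ : Fin m) : ℕ) from rfl, sorted_eq]
    exact hσ _
  · rw [sorted_eq_zero σ i (not_lt.1 h)]

lemma sorted_antitone (hσ : ∀ j, 0 ≤ σ j) : Antitone (sorted σ) := by
  intro i j hij
  by_cases hj : j < m
  · have hi : i < m := lt_of_le_of_lt hij hj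
    rw [show i = ((⟨i, hi⟩ : Fin m) : ℕ) from rfl, show j = ((⟨j, hj⟩ : Fin m) : ℕ) from rfl,
      sorted_eq, sorted_eq]
    exact antitone_comp_descPerm σ (by exact_mod_cast hij)
  · rw [sorted_eq_zero σ j (not_lt.1 hj)]
    exact sorted_nonneg σ hσ i

lemma sorted_tail_zero (hσ : ∀ j, 0 ≤ σ j) (r : ℕ)
    (hcard : (univ.filter fun j => σ j ≠ 0).card ≤ r) (i : ℕ) (hi : r ≤ i) :
    sorted σ i = 0 := by
  by_cases him : i < m
  · by_contra hne
    have hpos : 0 < sorted σ i := lt_of_le_of_ne (sorted_nonneg σ hσ i) (Ne.symm hne)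
    have hsub : (univ.filter fun k : Fin m => (k : ℕ) ≤ i) ⊆
        (univ.filter fun k : Fin m => σ (descPerm σ k) ≠ 0) := by
      intro k hk
      simp only [mem_filter, mem_univ, true_and] at hk ⊢
      have : sorted σ i ≤ sorted σ k := sorted_antitone σ hσ hk
      rw [sorted_eq] at this
      exact ne_of_gt (lt_of_lt_of_le hpos this)
    have h1 : (univ.filter fun k : Fin m => (k : ℕ) ≤ i).card = i + 1 := by
      have hlt : ∀ j ∈ Finset.range (i + 1), j < m := fun j hj => by
        simp only [Finset.mem_range] at hj; omega
      have : (univ.filter fun k : Fin m => (k : ℕ) ≤ i) = (Finset.range (i + 1)).attachFin hlt := by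
        ext k
        simp only [mem_filter, mem_univ, true_and, Finset.mem_attachFin, Finset.mem_range]
        omega
      rw [this, Finset.card_attachFin, Finset.card_range]
    have h2 : (univ.filter fun k : Fin m => σ (descPerm σ k) ≠ 0).card =
        (univ.filter fun j => σ j ≠ 0).card := by
      apply Finset.card_bij (fun k _ => descPerm σ k)
      · intro k hk; simp only [mem_filter, mem_univ, true_and] at hk ⊢; exact hk
      · intro a _ b _ hab; exact (descPerm σ).injective hab
      · intro j hj
        refine ⟨(descPerm σ).symm j, ?_, by simp⟩
        simp only [mem_filter, mem_univ, true_and, Equiv.apply_symm_apply] at hj ⊢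
        exact hj
    have := Finset.card_le_card hsub
    omega
  · exact sorted_eq_zero σ i (not_lt.1 him)

end SortedTuple


lemma itele {m : ℕ} (g : ℕ → ℝ) (hg0 : ∀ i, m ≤ i → g i = 0) (j : ℕ) (hj : j < m) :
    g j = ∑ s ∈ Finset.range m, (if j ≤ s then (1:ℝ) else 0) * (g s - g (s+1)) := by
  symm
  have h1 : (Finset.range m).filter (fun s => j ≤ s) = Finset.Ico j m := by
    ext s; simp [Finset.mem_Ico]; omega
  simp only [boole_mul]
  rw [← Finset.sum_filter, h1, Finset.sum_Ico_eq_sum_range]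
  have h2 := Finset.sum_range_sub' (fun s => g (j + s)) (m - j)
  calc ∑ s ∈ Finset.range (m - j), (g (j + s) - g (j + s + 1))
      = ∑ s ∈ Finset.range (m - j), (g (j + s) - g (j + (s + 1))) :=
        Finset.sum_congr rfl (fun s _ => by rw [Nat.add_assoc])
    _ = g (j + 0) - g (j + (m - j)) := h2
    _ = g j := by
        rw [show j + (m - j) = m from by omega, hg0 m le_rfl, add_zero, sub_zero]

lemma abel_rearrange {m : ℕ} (g h : ℕ → ℝ) (C : ℕ → ℕ → ℝ)
    (hg : Antitone g) (hh : Antitone h)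
    (hg0 : ∀ i, m ≤ i → g i = 0) (hh0 : ∀ i, m ≤ i → h i = 0)
    (hC : ∀ j k, 0 ≤ C j k)
    (hrow : ∀ j, j < m → ∑ k ∈ Finset.range m, C j k ≤ 1)
    (hcol : ∀ k, k < m → ∑ j ∈ Finset.range m, C j k ≤ 1) :
    ∑ j ∈ Finset.range m, ∑ k ∈ Finset.range m, g j * h k * C j k ≤
      ∑ i ∈ Finset.range m, g i * h i := by
  set A : ℕ → ℝ := fun s => g s - g (s+1) with hA
  set B : ℕ → ℝ := fun t => h t - h (t+1) with hB
  have hA0 : ∀ s, 0 ≤ A s := fun s => sub_nonneg.2 (hg (Nat.le_succ s))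
  have hB0 : ∀ t, 0 ≤ B t := fun t => sub_nonneg.2 (hh (Nat.le_succ t))
  set I : ℕ → ℕ → ℝ := fun i s => if i ≤ s then (1:ℝ) else 0 with hI
  have hI0 : ∀ i s, 0 ≤ I i s := fun i s => by dsimp [I]; split <;> norm_num
  -- T' and N'
  set T : ℕ → ℕ → ℝ := fun s t => ∑ j ∈ Finset.range m, ∑ k ∈ Finset.range m,
    I j s * I k t * C j k with hT
  set N : ℕ → ℕ → ℝ := fun s t => ∑ i ∈ Finset.range m, I i s * I i t with hN
  have hfilter : ∀ s : ℕ, s < m → (Finset.range m).filter (fun j => j ≤ s) =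
      Finset.range (s+1) := by
    intro s hs; ext j; simp [Finset.mem_range]; omega
  have hItele : ∀ (f : ℕ → ℝ), ∀ s < m, ∑ j ∈ Finset.range m, I j s * f j =
      ∑ j ∈ Finset.range (s+1), f j := by
    intro f s hs
    rw [← hfilter s hs, Finset.sum_filter]
    exact Finset.sum_congr rfl (fun j _ => by dsimp [I]; split <;> simp)
  -- LHS = ∑ s ∑ t A s B t T s t
  have hLHS : ∑ j ∈ Finset.range m, ∑ k ∈ Finset.range m, g j * h k * C j k =
      ∑ s ∈ Finset.range m, ∑ t ∈ Finset.range m, A s * B t * T s t := by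
    have step1 : ∑ j ∈ Finset.range m, ∑ k ∈ Finset.range m, g j * h k * C j k =
        ∑ j ∈ Finset.range m, ∑ k ∈ Finset.range m, ∑ s ∈ Finset.range m,
          ∑ t ∈ Finset.range m, (I j s * A s) * (I k t * B t) * C j k := by
      refine Finset.sum_congr rfl (fun j hj => Finset.sum_congr rfl (fun k hk => ?_))
      rw [Finset.mem_range] at hj hk
      rw [itele g hg0 j hj, itele h hh0 k hk, Finset.sum_mul_sum, Finset.sum_mul]
      exact Finset.sum_congr rfl (fun s _ => Finset.sum_mul _ _ _)
    rw [step1]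
    rw [Finset.sum_congr rfl (fun j _ => Finset.sum_comm)]  -- j s k t
    rw [Finset.sum_comm]  -- s j k t
    rw [Finset.sum_congr rfl (fun s _ => Finset.sum_congr rfl (fun j _ => Finset.sum_comm))]
    rw [Finset.sum_congr rfl (fun s _ => Finset.sum_comm)]  -- s t j k
    refine Finset.sum_congr rfl (fun s _ => Finset.sum_congr rfl (fun t _ => ?_))
    rw [hT, Finset.mul_sum]
    refine Finset.sum_congr rfl (fun j _ => ?_)
    rw [Finset.mul_sum]
    exact Finset.sum_congr rfl (fun k _ => by ring)
  -- RHS = ∑ s ∑ t A s B t N s t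
  have hRHS : ∑ i ∈ Finset.range m, g i * h i =
      ∑ s ∈ Finset.range m, ∑ t ∈ Finset.range m, A s * B t * N s t := by
    have step1 : ∑ i ∈ Finset.range m, g i * h i =
        ∑ i ∈ Finset.range m, ∑ s ∈ Finset.range m, ∑ t ∈ Finset.range m,
          (I i s * A s) * (I i t * B t) := by
      refine Finset.sum_congr rfl (fun i hi => ?_)
      rw [Finset.mem_range] at hi
      rw [itele g hg0 i hi, itele h hh0 i hi, Finset.sum_mul_sum]
    rw [step1, Finset.sum_comm]
    rw [Finset.sum_congr rfl (fun s _ => Finset.sum_comm)]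
    refine Finset.sum_congr rfl (fun s _ => Finset.sum_congr rfl (fun t _ => ?_))
    rw [hN, Finset.mul_sum]
    exact Finset.sum_congr rfl (fun i _ => by ring)
  rw [hLHS, hRHS]
  refine Finset.sum_le_sum (fun s hs => Finset.sum_le_sum (fun t ht => ?_))
  rw [Finset.mem_range] at hs ht
  refine mul_le_mul_of_nonneg_left ?_ (mul_nonneg (hA0 s) (hB0 t))
  -- T s t ≤ N s t
  have hTst : T s t = ∑ j ∈ Finset.range (s+1), ∑ k ∈ Finset.range (t+1), C j k := by
    rw [hT]; dsimp only
    have : ∀ j, ∑ k ∈ Finset.range m, I j s * I k t * C j k =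
        I j s * ∑ k ∈ Finset.range (t+1), C j k := by
      intro j
      rw [← hItele (fun k => C j k) t ht, Finset.mul_sum]
      exact Finset.sum_congr rfl (fun k _ => by ring)
    rw [Finset.sum_congr rfl (fun j _ => this j), hItele _ s hs]
  have hNst : N s t = ((min s t : ℕ) : ℝ) + 1 := by
    rw [hN]; dsimp only
    have h1 : ∀ i : ℕ, I i s * I i t = if i ≤ s ∧ i ≤ t then (1:ℝ) else 0 := by
      intro i; dsimp [I]; by_cases h1 : i ≤ s <;> by_cases h2 : i ≤ t <;> simp [h1, h2]
    rw [Finset.sum_congr rfl (fun i _ => h1 i), Finset.sum_boole]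
    have : (Finset.range m).filter (fun i => i ≤ s ∧ i ≤ t) = Finset.range (min s t + 1) := by
      ext i; simp [Finset.mem_range]; omega
    rw [this, Finset.card_range]
    push_cast; ring
  have hb1 : T s t ≤ (s : ℝ) + 1 := by
    rw [hTst]
    calc ∑ j ∈ Finset.range (s+1), ∑ k ∈ Finset.range (t+1), C j k
        ≤ ∑ j ∈ Finset.range (s+1), (1:ℝ) := by
          refine Finset.sum_le_sum (fun j hj => ?_)
          rw [Finset.mem_range] at hj
          calc ∑ k ∈ Finset.range (t+1), C j k ≤ ∑ k ∈ Finset.range m, C j k :=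
                Finset.sum_le_sum_of_subset_of_nonneg
                  (Finset.range_subset_range.2 (by omega)) (fun k _ _ => hC j k)
            _ ≤ 1 := hrow j (by omega)
      _ = (s : ℝ) + 1 := by simp
  have hb2 : T s t ≤ (t : ℝ) + 1 := by
    rw [hTst, Finset.sum_comm]
    calc ∑ k ∈ Finset.range (t+1), ∑ j ∈ Finset.range (s+1), C j k
        ≤ ∑ k ∈ Finset.range (t+1), (1:ℝ) := by
          refine Finset.sum_le_sum (fun k hk => ?_)
          rw [Finset.mem_range] at hk
          calc ∑ j ∈ Finset.range (s+1), C j k ≤ ∑ j ∈ Finset.range m, C j k :=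
                Finset.sum_le_sum_of_subset_of_nonneg
                  (Finset.range_subset_range.2 (by omega)) (fun j _ _ => hC j k)
            _ ≤ 1 := hcol k (by omega)
      _ = (t : ℝ) + 1 := by simp
  rw [hNst]
  rcases le_total s t with hst | hst
  · rw [min_eq_left hst]; exact hb1
  · rw [min_eq_right hst]; exact hb2


lemma dp_self_nonneg {n : ℕ} (x : Fin n → ℝ) : 0 ≤ x ⬝ᵥ x :=
  Finset.sum_nonneg (fun i _ => mul_self_nonneg (x i))

lemma dp_sum_right {n m : ℕ} (x : Fin n → ℝ) (f : Fin m → (Fin n → ℝ)) :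
    x ⬝ᵥ (∑ k, f k) = ∑ k, x ⬝ᵥ f k := by
  simp only [dotProduct, Finset.sum_apply, Finset.mul_sum]
  rw [Finset.sum_comm]

lemma dp_sum_left {n m : ℕ} (x : Fin n → ℝ) (f : Fin m → (Fin n → ℝ)) :
    (∑ k, f k) ⬝ᵥ x = ∑ k, f k ⬝ᵥ x := by
  rw [dotProduct_comm, dp_sum_right]
  exact Finset.sum_congr rfl (fun k _ => dotProduct_comm _ _)

lemma bessel {n m : ℕ} (p : Fin m → (Fin n → ℝ)) (x : Fin n → ℝ)
    (hortho : ∀ k l, k ≠ l → p k ⬝ᵥ p l = 0) (hnorm : ∀ k, p k ⬝ᵥ p k ≤ 1) :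
    ∑ k, (x ⬝ᵥ p k)^2 ≤ x ⬝ᵥ x := by
  set c : Fin m → ℝ := fun k => x ⬝ᵥ p k with hc
  set y : Fin n → ℝ := x - ∑ k, c k • p k with hy
  have hyy : 0 ≤ y ⬝ᵥ y := dp_self_nonneg y
  have hxs : x ⬝ᵥ (∑ k, c k • p k) = ∑ k, c k ^ 2 := by
    rw [dp_sum_right]
    refine Finset.sum_congr rfl (fun k _ => ?_)
    rw [dotProduct_smul, smul_eq_mul]
    show c k * c k = c k ^ 2
    ring
  have hsx : (∑ k, c k • p k) ⬝ᵥ x = ∑ k, c k ^ 2 := by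
    rw [dotProduct_comm]; exact hxs
  have hss : (∑ k, c k • p k) ⬝ᵥ (∑ k, c k • p k) = ∑ k, c k ^ 2 * (p k ⬝ᵥ p k) := by
    rw [dp_sum_left]
    refine Finset.sum_congr rfl (fun k _ => ?_)
    rw [smul_dotProduct, dp_sum_right, smul_eq_mul]
    rw [Finset.sum_eq_single k]
    · rw [dotProduct_smul, smul_eq_mul]; ring
    · intro l _ hlk
      rw [dotProduct_smul, smul_eq_mul, hortho k l (Ne.symm hlk)]
      · ring
    · intro hk; exact absurd (Finset.mem_univ k) hk
  have key : y ⬝ᵥ y = x ⬝ᵥ x - 2 * ∑ k, c k ^ 2 + ∑ k, c k ^ 2 * (p k ⬝ᵥ p k) := by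
    rw [hy, sub_dotProduct, dotProduct_sub, dotProduct_sub, hxs, hsx, hss]
    ring
  have h2 : ∑ k, c k ^ 2 * (p k ⬝ᵥ p k) ≤ ∑ k, c k ^ 2 :=
    Finset.sum_le_sum (fun k _ => by
      nlinarith [sq_nonneg (c k), hnorm k])
  calc ∑ k, (x ⬝ᵥ p k) ^ 2 = ∑ k, c k ^ 2 := rfl
    _ ≤ x ⬝ᵥ x := by rw [key] at hyy; linarith


variable {n m : ℕ} (M : Matrix (Fin n) (Fin m) ℝ)

noncomputable def eV (j : Fin m) : Fin m → ℝ :=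
  ⇑((isHermitian_conjTranspose_mul_self M).eigenvectorBasis j)

noncomputable def eμ (j : Fin m) : ℝ :=
  (isHermitian_conjTranspose_mul_self M).eigenvalues j

lemma eV_dot (j j' : Fin m) : eV M j ⬝ᵥ eV M j' = if j = j' then (1:ℝ) else 0 := by
  have h := (isHermitian_conjTranspose_mul_self M).eigenvectorBasis.orthonormal
  rw [orthonormal_iff_ite] at h
  have := h j j'
  rw [← this]
  simp [eV, PiLp.inner_apply, RCLike.inner_apply, dotProduct, mul_comm]

lemma MtM_mulVec (j : Fin m) : (Mᵀ * M) *ᵥ eV M j = eμ M j • eV M j :=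
  (isHermitian_conjTranspose_mul_self M).mulVec_eigenvectorBasis j

lemma w_dot (j j' : Fin m) :
    (M *ᵥ eV M j) ⬝ᵥ (M *ᵥ eV M j') = eμ M j' * (eV M j ⬝ᵥ eV M j') := by
  have h1 : (M *ᵥ eV M j) ⬝ᵥ (M *ᵥ eV M j') = eV M j ⬝ᵥ ((Mᵀ * M) *ᵥ eV M j') := by
    conv_rhs => rw [← mulVec_mulVec, dotProduct_mulVec, vecMul_transpose]
  rw [h1, MtM_mulVec, dotProduct_smul, smul_eq_mul]

lemma eμ_nonneg (j : Fin m) : 0 ≤ eμ M j := by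
  have h := w_dot M j j
  rw [eV_dot, if_pos rfl, mul_one] at h
  rw [← h]
  exact Finset.sum_nonneg (fun i _ => mul_self_nonneg _)

lemma w_zero (j : Fin m) (h : eμ M j = 0) : M *ᵥ eV M j = 0 := by
  have h1 := w_dot M j j
  rw [eV_dot, if_pos rfl, mul_one, h] at h1
  funext i
  rw [dotProduct] at h1
  have h2 := (Finset.sum_eq_zero_iff_of_nonneg (s := Finset.univ)
    (fun i _ => mul_self_nonneg ((M *ᵥ eV M j) i))).1 h1 i (Finset.mem_univ i)
  simpa [Pi.zero_apply, mul_self_eq_zero] using h2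

lemma trace_formula (N : Matrix (Fin n) (Fin m) ℝ) :
    Matrix.trace (Mᵀ * N) =
      ∑ j, ∑ k, ((M *ᵥ eV M j) ⬝ᵥ (N *ᵥ eV N k)) * (eV N k ⬝ᵥ eV M j) := by
  set O : Matrix (Fin m) (Fin m) ℝ :=
    ((isHermitian_conjTranspose_mul_self M).eigenvectorUnitary : Matrix (Fin m) (Fin m) ℝ) with hO
  set P : Matrix (Fin m) (Fin m) ℝ :=
    ((isHermitian_conjTranspose_mul_self N).eigenvectorUnitary : Matrix (Fin m) (Fin m) ℝ) with hP
  have hOmem := ((isHermitian_conjTranspose_mul_self M).eigenvectorUnitary).2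
  have hPmem := ((isHermitian_conjTranspose_mul_self N).eigenvectorUnitary).2
  rw [Matrix.mem_unitaryGroup_iff] at hOmem hPmem
  have hOt : O * Oᵀ = 1 := by
    rw [← conjTranspose_eq_transpose_of_trivial, ← star_eq_conjTranspose]
    exact hOmem
  have hPt : P * Pᵀ = 1 := by
    rw [← conjTranspose_eq_transpose_of_trivial, ← star_eq_conjTranspose]
    exact hPmem
  have e1 : ((M * O)ᵀ * (N * P)) * (Pᵀ * O) = Oᵀ * ((Mᵀ * N) * O) := by
    rw [transpose_mul]
    calc Oᵀ * Mᵀ * (N * P) * (Pᵀ * O) = Oᵀ * ((Mᵀ * (N * (P * Pᵀ))) * O) := by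
          simp only [Matrix.mul_assoc]
      _ = Oᵀ * ((Mᵀ * N) * O) := by rw [hPt, Matrix.mul_one, Matrix.mul_assoc]
  have key : Matrix.trace (((M * O)ᵀ * (N * P)) * (Pᵀ * O)) = Matrix.trace (Mᵀ * N) := by
    rw [e1, Matrix.trace_mul_comm, Matrix.mul_assoc, Matrix.mul_assoc, hOt, Matrix.mul_one]
  rw [← key, Matrix.trace]
  simp only [Matrix.diag_apply, Matrix.mul_apply, Matrix.transpose_apply]
  refine Finset.sum_congr rfl (fun j _ => Finset.sum_congr rfl (fun k _ => ?_))
  simp only [mulVec, dotProduct, eV, hO, hP, Matrix.IsHermitian.eigenvectorUnitary_apply]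


-- helper: the normalized left singular family
noncomputable def lsv {n m : ℕ} (M : Matrix (Fin n) (Fin m) ℝ) (j : Fin m) : Fin n → ℝ :=
  if eμ M j = 0 then 0 else (Real.sqrt (eμ M j))⁻¹ • (M *ᵥ eV M j)

lemma sqrt_eμ_pos {n m : ℕ} (M : Matrix (Fin n) (Fin m) ℝ) {j : Fin m} (h : eμ M j ≠ 0) :
    0 < Real.sqrt (eμ M j) :=
  Real.sqrt_pos.2 (lt_of_le_of_ne (eμ_nonneg M j) (Ne.symm h))

lemma w_eq_sv_smul {n m : ℕ} (M : Matrix (Fin n) (Fin m) ℝ) (N : Matrix (Fin n) (Fin m) ℝ)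
    (j k : Fin m) :
    (M *ᵥ eV M j) ⬝ᵥ (N *ᵥ eV N k) =
      Real.sqrt (eμ M j) * Real.sqrt (eμ N k) * (lsv M j ⬝ᵥ lsv N k) := by
  by_cases hj : eμ M j = 0
  · rw [w_zero M j hj, lsv, if_pos hj, zero_dotProduct, zero_dotProduct, mul_zero]
  by_cases hk : eμ N k = 0
  · rw [w_zero N k hk, lsv, lsv, if_pos hk, dotProduct_zero, dotProduct_zero, mul_zero]
  rw [lsv, lsv, if_neg hj, if_neg hk, smul_dotProduct, dotProduct_smul, smul_eq_mul, smul_eq_mul]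
  have h1 := sqrt_eμ_pos M hj
  have h2 := sqrt_eμ_pos N hk
  field_simp

lemma lsv_ortho {n m : ℕ} (M : Matrix (Fin n) (Fin m) ℝ) (j j' : Fin m) (h : j ≠ j') :
    lsv M j ⬝ᵥ lsv M j' = 0 := by
  by_cases hj : eμ M j = 0
  · rw [lsv, if_pos hj, zero_dotProduct]
  by_cases hj' : eμ M j' = 0
  · rw [lsv, lsv, if_pos hj', dotProduct_zero]
  rw [lsv, lsv, if_neg hj, if_neg hj', smul_dotProduct, dotProduct_smul, smul_eq_mul, smul_eq_mul,
    w_dot, eV_dot, if_neg h]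
  ring

lemma lsv_norm {n m : ℕ} (M : Matrix (Fin n) (Fin m) ℝ) (j : Fin m) :
    lsv M j ⬝ᵥ lsv M j ≤ 1 := by
  by_cases hj : eμ M j = 0
  · rw [lsv, if_pos hj, zero_dotProduct]; norm_num
  rw [lsv, if_neg hj, smul_dotProduct, dotProduct_smul, smul_eq_mul, smul_eq_mul,
    w_dot, eV_dot, if_pos rfl, mul_one]
  have h1 := sqrt_eμ_pos M hj
  set a := Real.sqrt (eμ M j) with ha
  have hsq : a * a = eμ M j := Real.mul_self_sqrt (eμ_nonneg M j)
  rw [← hsq]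
  rw [show a⁻¹ * (a⁻¹ * (a * a)) = 1 from by field_simp]

lemma eV_norm {n m : ℕ} (M : Matrix (Fin n) (Fin m) ℝ) (j : Fin m) :
    eV M j ⬝ᵥ eV M j ≤ 1 := by rw [eV_dot, if_pos rfl]


/-- von Neumann trace inequality: `tr (Mᵀ N) ≤ Σᵢ σᵢ(M) σᵢ(N)`. -/
theorem von_neumann_trace_inequality {n m : ℕ} (M N : Matrix (Fin n) (Fin m) ℝ) :
    Matrix.trace (Mᵀ * N) ≤ ∑ i ∈ Finset.range (min n m), sv M i * sv N i := by
  classical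
  set σ : Fin m → ℝ := fun j => Real.sqrt (eμ M j) with hσ
  set τ : Fin m → ℝ := fun k => Real.sqrt (eμ N k) with hτ
  have hσ0 : ∀ j, 0 ≤ σ j := fun j => Real.sqrt_nonneg _
  have hτ0 : ∀ k, 0 ≤ τ k := fun k => Real.sqrt_nonneg _
  set E : Fin m → Fin m → ℝ := fun j k =>
    ((lsv M j ⬝ᵥ lsv N k)^2 + (eV M j ⬝ᵥ eV N k)^2)/2 with hE
  have hE0 : ∀ j k, 0 ≤ E j k := fun j k => by positivity
  -- row and column bounds
  have hrowE : ∀ j, ∑ k, E j k ≤ 1 := by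
    intro j
    have b1 : ∑ k, (lsv M j ⬝ᵥ lsv N k)^2 ≤ 1 :=
      le_trans (bessel (lsv N) (lsv M j) (lsv_ortho N) (lsv_norm N)) (lsv_norm M j)
    have b2 : ∑ k, (eV M j ⬝ᵥ eV N k)^2 ≤ 1 := by
      refine le_trans (bessel (eV N) (eV M j) ?_ ?_) (eV_norm M j)
      · intro k l hkl; rw [eV_dot, if_neg hkl]
      · exact eV_norm N
    rw [hE]
    rw [← Finset.sum_div, Finset.sum_add_distrib]
    linarith
  have hcolE : ∀ k, ∑ j, E j k ≤ 1 := by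
    intro k
    have b1 : ∑ j, (lsv M j ⬝ᵥ lsv N k)^2 ≤ 1 := by
      have := le_trans (bessel (lsv M) (lsv N k) (lsv_ortho M) (lsv_norm M)) (lsv_norm N k)
      calc ∑ j, (lsv M j ⬝ᵥ lsv N k)^2 = ∑ j, (lsv N k ⬝ᵥ lsv M j)^2 :=
            Finset.sum_congr rfl (fun j _ => by rw [dotProduct_comm])
        _ ≤ 1 := this
    have b2 : ∑ j, (eV M j ⬝ᵥ eV N k)^2 ≤ 1 := by
      have horth : ∀ j j' : Fin m, j ≠ j' → eV M j ⬝ᵥ eV M j' = 0 := by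
        intro a b hab; rw [eV_dot, if_neg hab]
      have := le_trans (bessel (eV M) (eV N k) horth (eV_norm M)) (eV_norm N k)
      calc ∑ j, (eV M j ⬝ᵥ eV N k)^2 = ∑ j, (eV N k ⬝ᵥ eV M j)^2 :=
            Finset.sum_congr rfl (fun j _ => by rw [dotProduct_comm])
        _ ≤ 1 := this
    rw [hE]
    rw [← Finset.sum_div, Finset.sum_add_distrib]
    linarith
  -- step 1: trace bound by E
  have step1 : Matrix.trace (Mᵀ * N) ≤ ∑ j, ∑ k, σ j * τ k * E j k := by
    rw [trace_formula M N]
    refine Finset.sum_le_sum (fun j _ => Finset.sum_le_sum (fun k _ => ?_))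
    rw [w_eq_sv_smul M N j k]
    have key : (lsv M j ⬝ᵥ lsv N k) * (eV N k ⬝ᵥ eV M j) ≤ E j k := by
      rw [hE, dotProduct_comm (eV N k) (eV M j)]
      nlinarith [sq_nonneg ((lsv M j ⬝ᵥ lsv N k) - (eV M j ⬝ᵥ eV N k))]
    calc σ j * τ k * (lsv M j ⬝ᵥ lsv N k) * (eV N k ⬝ᵥ eV M j)
        = σ j * τ k * ((lsv M j ⬝ᵥ lsv N k) * (eV N k ⬝ᵥ eV M j)) := by ring
      _ ≤ σ j * τ k * E j k :=
          mul_le_mul_of_nonneg_left key (mul_nonneg (hσ0 j) (hτ0 k))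
  -- step 2: reindex to sorted sequences
  set e : Equiv.Perm (Fin m) := descPerm σ with he
  set f : Equiv.Perm (Fin m) := descPerm τ with hf
  set C : ℕ → ℕ → ℝ := fun a b =>
    if ha : a < m then (if hb : b < m then E (e ⟨a, ha⟩) (f ⟨b, hb⟩) else 0) else 0 with hC
  have step2 : ∑ j, ∑ k, σ j * τ k * E j k =
      ∑ a ∈ Finset.range m, ∑ b ∈ Finset.range m, sorted σ a * sorted τ b * C a b := by
    rw [← Fin.sum_univ_eq_sum_range (fun a => ∑ b ∈ Finset.range m,
      sorted σ a * sorted τ b * C a b) m]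
    have inner : ∀ i : Fin m, ∑ b ∈ Finset.range m, sorted σ (i:ℕ) * sorted τ b * C i b =
        ∑ i' : Fin m, sorted σ (i:ℕ) * sorted τ (i':ℕ) * C i i' :=
      fun i => (Fin.sum_univ_eq_sum_range (fun b => sorted σ (i:ℕ) * sorted τ b * C i b) m).symm
    rw [Finset.sum_congr rfl (fun i _ => inner i)]
    have hterm : ∀ i i' : Fin m, sorted σ (i:ℕ) * sorted τ (i':ℕ) * C i i' =
        σ (e i) * τ (f i') * E (e i) (f i') := by
      intro i i'
      rw [sorted_eq, sorted_eq, hC]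
      simp only [Fin.is_lt, dif_pos, Fin.eta]
      rfl
    rw [Finset.sum_congr rfl (fun i _ => Finset.sum_congr rfl (fun i' _ => hterm i i'))]
    rw [← Equiv.sum_comp e (fun j => ∑ k, σ j * τ k * E j k)]
    exact Finset.sum_congr rfl (fun i _ =>
      (Equiv.sum_comp f (fun k => σ (e i) * τ k * E (e i) k)).symm)
  -- step 3: abel rearrangement
  have hCrow : ∀ a, a < m → ∑ b ∈ Finset.range m, C a b ≤ 1 := by
    intro a ha
    rw [← Fin.sum_univ_eq_sum_range (fun b => C a b) m]
    have hterm : ∀ i' : Fin m, C a (i' : ℕ) = E (e ⟨a, ha⟩) (f i') := by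
      intro i'
      simp only [hC, ha, dif_pos, Fin.is_lt, Fin.eta]
    rw [Finset.sum_congr rfl (fun i' _ => hterm i')]
    rw [Equiv.sum_comp f (fun k => E (e ⟨a, ha⟩) k)]
    exact hrowE _
  have hCcol : ∀ b, b < m → ∑ a ∈ Finset.range m, C a b ≤ 1 := by
    intro b hb
    rw [← Fin.sum_univ_eq_sum_range (fun a => C a b) m]
    have hterm : ∀ i : Fin m, C (i : ℕ) b = E (e i) (f ⟨b, hb⟩) := by
      intro i
      simp only [hC, hb, dif_pos, Fin.is_lt, Fin.eta]
    rw [Finset.sum_congr rfl (fun i _ => hterm i)]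
    rw [Equiv.sum_comp e (fun j => E j (f ⟨b, hb⟩))]
    exact hcolE _
  have step3 : ∑ a ∈ Finset.range m, ∑ b ∈ Finset.range m,
      sorted σ a * sorted τ b * C a b ≤ ∑ i ∈ Finset.range m, sorted σ i * sorted τ i := by
    refine abel_rearrange (sorted σ) (sorted τ) C (sorted_antitone σ hσ0) (sorted_antitone τ hτ0)
      (sorted_eq_zero σ) (sorted_eq_zero τ) ?_ hCrow hCcol
    intro a b
    simp only [hC]
    split_ifs
    · exact hE0 _ _
    · exact le_refl 0
    · exact le_refl 0
  -- step 4: trim the tail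
  have cardM : (univ.filter fun j => σ j ≠ 0).card ≤ min n m := by
    have h1 : (univ.filter fun j => σ j ≠ 0) = (univ.filter fun j => eμ M j ≠ 0) := by
      refine Finset.filter_congr (fun j _ => ?_)
      simp only [hσ, ne_eq, Real.sqrt_eq_zero (eμ_nonneg M j)]
    have h2 : (univ.filter fun j => eμ M j ≠ 0).card =
        Fintype.card {j // eμ M j ≠ 0} := (Fintype.card_subtype _).symm
    have h3 := (isHermitian_conjTranspose_mul_self M).rank_eq_card_non_zero_eigs
    have h4 : (Mᵀ * M).rank = M.rank := M.rank_transpose_mul_self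
    have h5 : M.rank ≤ min n m := le_min M.rank_le_height M.rank_le_width
    have h3' : (Mᵀ * M).rank = Fintype.card {j // eμ M j ≠ 0} := h3
    rw [h1, h2]
    omega
  have cardN : (univ.filter fun k => τ k ≠ 0).card ≤ min n m := by
    have h1 : (univ.filter fun k => τ k ≠ 0) = (univ.filter fun k => eμ N k ≠ 0) := by
      refine Finset.filter_congr (fun k _ => ?_)
      simp only [hτ, ne_eq, Real.sqrt_eq_zero (eμ_nonneg N k)]
    have h2 : (univ.filter fun k => eμ N k ≠ 0).card =
        Fintype.card {k // eμ N k ≠ 0} := (Fintype.card_subtype _).symm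
    have h3 := (isHermitian_conjTranspose_mul_self N).rank_eq_card_non_zero_eigs
    have h4 : (Nᵀ * N).rank = N.rank := N.rank_transpose_mul_self
    have h5 : N.rank ≤ min n m := le_min N.rank_le_height N.rank_le_width
    have h3' : (Nᵀ * N).rank = Fintype.card {k // eμ N k ≠ 0} := h3
    rw [h1, h2]
    omega
  have step4 : ∑ i ∈ Finset.range m, sorted σ i * sorted τ i =
      ∑ i ∈ Finset.range (min n m), sv M i * sv N i := by
    have hsv1 : ∀ i, sv M i = sorted σ i := fun i => rfl
    have hsv2 : ∀ i, sv N i = sorted τ i := fun i => rfl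
    symm
    rw [Finset.sum_congr rfl (fun i _ => by rw [hsv1 i, hsv2 i])]
    apply Finset.sum_subset (Finset.range_subset_range.2 (min_le_right n m))
    intro i hi hni
    rw [Finset.mem_range, not_lt] at hni
    rw [sorted_tail_zero σ hσ0 (min n m) cardM i hni, zero_mul]
  calc Matrix.trace (Mᵀ * N) ≤ ∑ j, ∑ k, σ j * τ k * E j k := step1
    _ = ∑ a ∈ Finset.range m, ∑ b ∈ Finset.range m, sorted σ a * sorted τ b * C a b := step2
    _ ≤ ∑ i ∈ Finset.range m, sorted σ i * sorted τ i := step3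
    _ = ∑ i ∈ Finset.range (min n m), sv M i * sv N i := step4
end

section
/- For the function f(M) = ½‖M‖_F² + χ_{rank(M) ≤ r}(M), its Fenchel conjugate is f*(Y) = ½ Σ_{i=1}^r σᵢ(Y)² = ½‖Y‖_{F,r}². -/
open Matrix BigOperators Finset

/-- Fenchel conjugate (with trace inner product) of an extended-real-valued function. -/
noncomputable def fconj {n m : ℕ} (f : Matrix (Fin n) (Fin m) ℝ → EReal)
    (Y : Matrix (Fin n) (Fin m) ℝ) : EReal :=
  ⨆ M, ((ip M Y : ℝ) : EReal) - f M

/-- `f(M) = ½‖M‖_F² + χ_{rank M ≤ r}(M)`. -/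
noncomputable def fRank {n m : ℕ} (r : ℕ) (M : Matrix (Fin n) (Fin m) ℝ) : EReal :=
  if M.rank ≤ r then ((2⁻¹ * fro M ^ 2 : ℝ) : EReal) else ⊤


noncomputable def ev {n m : ℕ} (Y : Matrix (Fin n) (Fin m) ℝ) : Fin m → ℝ :=
  (Matrix.isHermitian_conjTranspose_mul_self Y).eigenvalues

noncomputable def evec {n m : ℕ} (Y : Matrix (Fin n) (Fin m) ℝ) (j : Fin m) : Fin m → ℝ :=
  ((Matrix.isHermitian_conjTranspose_mul_self Y).eigenvectorBasis j : EuclideanSpace ℝ (Fin m))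

lemma inner_eq_dot {m : ℕ} (x y : EuclideanSpace ℝ (Fin m)) :
    (inner ℝ x y : ℝ) = (x : Fin m → ℝ) ⬝ᵥ (y : Fin m → ℝ) := by
  simp [PiLp.inner_apply, RCLike.inner_apply, dotProduct, mul_comm]

lemma ev_nonneg {n m : ℕ} (Y : Matrix (Fin n) (Fin m) ℝ) (j : Fin m) : 0 ≤ ev Y j := by
  have h : (Yᵀ * Y).PosSemidef := by
    have := Matrix.posSemidef_conjTranspose_mul_self Y
    exact this
  exact h.eigenvalues_nonneg j

lemma evec_dot {n m : ℕ} (Y : Matrix (Fin n) (Fin m) ℝ) (j k : Fin m) :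
    evec Y j ⬝ᵥ evec Y k = if j = k then 1 else 0 := by
  have h := (Matrix.isHermitian_conjTranspose_mul_self Y).eigenvectorBasis.orthonormal
  rcases eq_or_ne j k with rfl | hne
  · have h2 : (inner ℝ ((Matrix.isHermitian_conjTranspose_mul_self Y).eigenvectorBasis j)
        ((Matrix.isHermitian_conjTranspose_mul_self Y).eigenvectorBasis j) : ℝ) = 1 := by
      rw [real_inner_self_eq_norm_sq, h.1 j]; norm_num
    rw [inner_eq_dot] at h2
    simpa [evec] using h2
  · have h2 : (inner ℝ ((Matrix.isHermitian_conjTranspose_mul_self Y).eigenvectorBasis j)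
        ((Matrix.isHermitian_conjTranspose_mul_self Y).eigenvectorBasis k) : ℝ) = 0 := h.2 hne
    rw [inner_eq_dot] at h2
    simpa [evec, hne] using h2

lemma evec_mulVec {n m : ℕ} (Y : Matrix (Fin n) (Fin m) ℝ) (j : Fin m) :
    (Yᵀ * Y) *ᵥ evec Y j = ev Y j • evec Y j :=
  (Matrix.isHermitian_conjTranspose_mul_self Y).mulVec_eigenvectorBasis j

lemma quadform {n m : ℕ} (Y : Matrix (Fin n) (Fin m) ℝ) (x : Fin m → ℝ) :
    (Y *ᵥ x) ⬝ᵥ (Y *ᵥ x) = x ⬝ᵥ ((Yᵀ * Y) *ᵥ x) := by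
  rw [Matrix.dotProduct_mulVec x, ← Matrix.vecMul_vecMul, Matrix.vecMul_transpose,
    ← Matrix.dotProduct_mulVec]

lemma quad_eigen {n m : ℕ} (Y : Matrix (Fin n) (Fin m) ℝ) (j : Fin m) :
    (Y *ᵥ evec Y j) ⬝ᵥ (Y *ᵥ evec Y j) = ev Y j := by
  rw [quadform, evec_mulVec, dotProduct_smul, smul_eq_mul, evec_dot]
  simp

lemma parseval_dot {n m : ℕ} (Y : Matrix (Fin n) (Fin m) ℝ) (x : Fin m → ℝ) :
    ∑ j, (evec Y j ⬝ᵥ x) ^ 2 = x ⬝ᵥ x := by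
  set x' : EuclideanSpace ℝ (Fin m) := WithLp.toLp 2 x with hx'
  have h := (Matrix.isHermitian_conjTranspose_mul_self Y).eigenvectorBasis.sum_inner_mul_inner x' x'
  rw [inner_eq_dot] at h
  rw [show (x ⬝ᵥ x) = ((x' : Fin m → ℝ) ⬝ᵥ (x' : Fin m → ℝ)) from rfl, ← h]
  refine Finset.sum_congr rfl fun j _ => ?_
  rw [inner_eq_dot, inner_eq_dot]
  have h1 : ((x' : Fin m → ℝ) ⬝ᵥ evec Y j) = evec Y j ⬝ᵥ x := dotProduct_comm _ _
  rw [show (((Matrix.isHermitian_conjTranspose_mul_self Y).eigenvectorBasis j : EuclideanSpace ℝ (Fin m)) : Fin m → ℝ) = evec Y j from rfl]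
  rw [h1, sq]


lemma comb {m r : ℕ} (hr1 : 1 ≤ r) (hr : r ≤ m) (f t : Fin m → ℝ)
    (hf : Antitone f) (hf0 : ∀ j, 0 ≤ f j) (ht0 : ∀ j, 0 ≤ t j) (ht1 : ∀ j, t j ≤ 1)
    (hts : ∑ j, t j ≤ r) :
    ∑ j, t j * f j ≤ ∑ i : Fin r, f (Fin.castLE hr i) := by
  have hrm : r - 1 < m := lt_of_lt_of_le (Nat.sub_lt hr1 one_pos) hr
  set c := f ⟨r - 1, hrm⟩ with hc
  set s : Finset (Fin m) := Finset.map (Fin.castLEEmb hr) Finset.univ with hs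
  have hmem : ∀ j : Fin m, j ∈ s ↔ (j : ℕ) < r := by
    intro j
    simp only [hs, Finset.mem_map, Finset.mem_univ, true_and]
    constructor
    · rintro ⟨i, rfl⟩; exact i.isLt
    · intro hj; exact ⟨⟨j, hj⟩, rfl⟩
  have hcard : s.card = r := by simp [hs]
  have hsum_s : ∑ j ∈ s, f j = ∑ i : Fin r, f (Fin.castLE hr i) := Finset.sum_map _ _ _
  rw [← hsum_s]
  have key1 : ∀ j ∈ s, t j * f j - f j ≤ (t j - 1) * c := by
    intro j hj
    have hjr : (j : ℕ) < r := (hmem j).1 hj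
    have hcf : c ≤ f j := hf (by rw [Fin.le_def]; simp; omega)
    nlinarith [ht1 j]
  have key2 : ∀ j ∈ sᶜ, t j * f j ≤ t j * c := by
    intro j hj
    have hjr : ¬ (j : ℕ) < r := fun h => (Finset.mem_compl.1 hj) ((hmem j).2 h)
    have hfc : f j ≤ c := hf (by rw [Fin.le_def]; simp; omega)
    nlinarith [ht0 j]
  have A : ∑ j ∈ s, (t j * f j - f j) ≤ ∑ j ∈ s, (t j - 1) * c := Finset.sum_le_sum key1
  have B : ∑ j ∈ sᶜ, t j * f j ≤ ∑ j ∈ sᶜ, t j * c := Finset.sum_le_sum key2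
  have hA : ∑ j ∈ s, (t j * f j - f j) = ∑ j ∈ s, t j * f j - ∑ j ∈ s, f j :=
    Finset.sum_sub_distrib _ _
  have hA2 : ∑ j ∈ s, (t j - 1) * c = (∑ j ∈ s, t j - r) * c := by
    rw [← Finset.sum_mul, Finset.sum_sub_distrib]
    simp [hcard]
  have hB2 : ∑ j ∈ sᶜ, t j * c = (∑ j ∈ sᶜ, t j) * c := by rw [Finset.sum_mul]
  have hsplit : ∑ j ∈ s, t j * f j + ∑ j ∈ sᶜ, t j * f j = ∑ j, t j * f j :=
    Finset.sum_add_sum_compl s _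
  have hsplit2 : ∑ j ∈ s, t j + ∑ j ∈ sᶜ, t j = ∑ j, t j := Finset.sum_add_sum_compl s _
  have hc0 : 0 ≤ c := hf0 _
  have hfinal : (∑ j ∈ s, t j - r) * c + (∑ j ∈ sᶜ, t j) * c ≤ 0 := by
    have : (∑ j ∈ s, t j - r) + (∑ j ∈ sᶜ, t j) = ∑ j, t j - r := by linarith
    have h2 : ((∑ j ∈ s, t j - r) + (∑ j ∈ sᶜ, t j)) * c ≤ 0 :=
      mul_nonpos_of_nonpos_of_nonneg (by linarith) hc0
    nlinarith
  linarith

lemma parseval_dot2 {n m : ℕ} (Y : Matrix (Fin n) (Fin m) ℝ) (x y : Fin m → ℝ) :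
    ∑ j, (evec Y j ⬝ᵥ x) * (evec Y j ⬝ᵥ y) = x ⬝ᵥ y := by
  set x' : EuclideanSpace ℝ (Fin m) := WithLp.toLp 2 x with hx'
  set y' : EuclideanSpace ℝ (Fin m) := WithLp.toLp 2 y with hy'
  have h := (Matrix.isHermitian_conjTranspose_mul_self Y).eigenvectorBasis.sum_inner_mul_inner x' y'
  rw [inner_eq_dot] at h
  rw [show (x ⬝ᵥ y) = ((x' : Fin m → ℝ) ⬝ᵥ (y' : Fin m → ℝ)) from rfl, ← h]
  refine Finset.sum_congr rfl fun j _ => ?_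
  rw [inner_eq_dot, inner_eq_dot]
  rw [show (((Matrix.isHermitian_conjTranspose_mul_self Y).eigenvectorBasis j :
    EuclideanSpace ℝ (Fin m)) : Fin m → ℝ) = evec Y j from rfl]
  rw [dotProduct_comm (x' : Fin m → ℝ)]

lemma transpose_mul_self_transpose {n m : ℕ} (Y : Matrix (Fin n) (Fin m) ℝ) :
    (Yᵀ * Y)ᵀ = Yᵀ * Y := by
  rw [Matrix.transpose_mul, Matrix.transpose_transpose]

lemma evec_mulVec' {n m : ℕ} (Y : Matrix (Fin n) (Fin m) ℝ) (j : Fin m) :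
    (Yᵀ * Y) *ᵥ evec Y j = ev Y j • evec Y j :=
  (Matrix.isHermitian_conjTranspose_mul_self Y).mulVec_eigenvectorBasis j

lemma quad_expand {n m : ℕ} (Y : Matrix (Fin n) (Fin m) ℝ) (x : Fin m → ℝ) :
    x ⬝ᵥ ((Yᵀ * Y) *ᵥ x) = ∑ j, ev Y j * (evec Y j ⬝ᵥ x) ^ 2 := by
  rw [← parseval_dot2 Y x ((Yᵀ * Y) *ᵥ x)]
  refine Finset.sum_congr rfl fun j _ => ?_
  have h1 : evec Y j ⬝ᵥ ((Yᵀ * Y) *ᵥ x) = ((Yᵀ * Y) *ᵥ evec Y j) ⬝ᵥ x := by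
    rw [Matrix.dotProduct_mulVec]
    congr 1
    rw [← Matrix.mulVec_transpose, transpose_mul_self_transpose]
  rw [h1, evec_mulVec', smul_dotProduct, smul_eq_mul]
  ring


lemma exists_onfamily {n m : ℕ} (M : Matrix (Fin n) (Fin m) ℝ) :
    ∃ (d : ℕ) (w : Fin d → (Fin m → ℝ)),
      d = M.rank ∧
      (∀ k l, w k ⬝ᵥ w l = if k = l then 1 else 0) ∧
      (∀ i : Fin n, M i = ∑ k, (w k ⬝ᵥ M i) • w k) := by
  classical
  set W : Submodule ℝ (Fin m → ℝ) := LinearMap.range (Matrix.mulVecLin Mᵀ) with hW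
  set W' : Submodule ℝ (EuclideanSpace ℝ (Fin m)) :=
    W.map (EuclideanSpace.equiv (Fin m) ℝ).symm.toLinearEquiv.toLinearMap with hW'
  have hd : Module.finrank ℝ W' = M.rank := by
    have h1 := ((EuclideanSpace.equiv (Fin m) ℝ).symm.toLinearEquiv.submoduleMap W).finrank_eq
    have h2 : Module.finrank ℝ W = M.rank := by rw [← Matrix.rank_transpose M]; rfl
    rw [← h2]; exact h1.symm
  set b := stdOrthonormalBasis ℝ W' with hb
  set w : Fin (Module.finrank ℝ W') → (Fin m → ℝ) :=
    fun k => ((b k : W') : EuclideanSpace ℝ (Fin m)) with hw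
  refine ⟨Module.finrank ℝ W', w, hd, ?_, ?_⟩
  · intro k l
    have h := orthonormal_iff_ite.mp b.orthonormal k l
    rw [Submodule.coe_inner] at h
    have h2 : (inner ℝ ((b k : W') : EuclideanSpace ℝ (Fin m)) ((b l : W') : EuclideanSpace ℝ (Fin m)) : ℝ)
        = ∑ j, w k j * w l j := by
      simp [PiLp.inner_apply, RCLike.inner_apply]
      exact Finset.sum_congr rfl fun j _ => mul_comm _ _
    rw [h2] at h
    simpa [dotProduct] using h
  · intro i
    have hmem : (M i : Fin m → ℝ) ∈ W := by
      refine ⟨Pi.single i 1, ?_⟩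
      ext j
      simp [Matrix.mulVecLin, Matrix.mulVec, dotProduct, Pi.single_apply]
    have hmem' : (WithLp.toLp 2 (M i : Fin m → ℝ)) ∈ W' := by
      rw [hW']
      exact ⟨M i, hmem, rfl⟩
    set x' : W' := ⟨WithLp.toLp 2 (M i : Fin m → ℝ), hmem'⟩ with hx'
    have h := b.sum_repr x'
    have hcoe : ((∑ k, b.repr x' k • b k : W') : EuclideanSpace ℝ (Fin m))
        = ∑ k, b.repr x' k • ((b k : W') : EuclideanSpace ℝ (Fin m)) := by
      push_cast
      rfl
    have hrepr : ∀ k, b.repr x' k = w k ⬝ᵥ M i := by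
      intro k
      rw [OrthonormalBasis.repr_apply_apply, Submodule.coe_inner]
      simp [PiLp.inner_apply, RCLike.inner_apply, dotProduct, hx']
      exact Finset.sum_congr rfl fun j _ => mul_comm _ _
    have h4 : ∑ k, b.repr x' k • ((b k : W') : EuclideanSpace ℝ (Fin m))
        = ((x' : EuclideanSpace ℝ (Fin m))) := by
      rw [← hcoe, h]
    have h6 : ∑ k, ((w k ⬝ᵥ M i) • ((b k : W') : EuclideanSpace ℝ (Fin m)))
        = ∑ k, b.repr x' k • ((b k : W') : EuclideanSpace ℝ (Fin m)) :=
      Finset.sum_congr rfl fun k _ => by rw [hrepr k]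
    simpa [hw, hx'] using congrArg WithLp.ofLp (h6.trans h4).symm

lemma exists_perm_sv {n m : ℕ} (Y : Matrix (Fin n) (Fin m) ℝ) :
    ∃ σ : Equiv.Perm (Fin m),
    (∀ i : Fin m, sv Y i.val = Real.sqrt (ev Y (σ i))) ∧
    Antitone (fun i => Real.sqrt (ev Y (σ i))) := by
  set g : Fin m → ℝ := fun j => Real.sqrt (ev Y j) with hg
  set σ : Equiv.Perm (Fin m) := Fin.revPerm.trans (Tuple.sort g) with hσ
  have hanti : Antitone (g ∘ σ) := by
    intro a b hab
    exact Tuple.monotone_sort g (by simpa [hσ] using Fin.rev_le_rev.mpr hab)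
  have hperm : List.Perm (List.ofFn (g ∘ σ)) (List.ofFn g) := σ.ofFn_comp_perm g
  have hS : (List.ofFn g).mergeSort (fun a b => decide (a ≥ b)) = List.ofFn (g ∘ σ) := by
    have hsorted : List.Pairwise (· ≥ ·) ((List.ofFn g).mergeSort (fun a b => decide (a ≥ b))) := by
      have := List.pairwise_mergeSort (le := fun a b : ℝ => decide (a ≥ b))
        (fun a b c h1 h2 => by simp_all; linarith)
        (fun a b => by simpa using le_total b a) (List.ofFn g)
      exact this.imp (fun h => by simpa using h)
    have : Std.Antisymm (α := ℝ) (· ≥ ·) := ⟨fun a b h1 h2 => le_antisymm h2 h1⟩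
    exact List.Perm.eq_of_pairwise' hsorted
      (List.pairwise_ofFn.mpr fun i j h => hanti h.le) ((List.mergeSort_perm _ _).trans hperm.symm)
  refine ⟨σ, fun i => ?_, hanti⟩
  show (((List.ofFn g).mergeSort (fun a b => decide (a ≥ b))).getD i.val 0) = _
  rw [hS, List.getD_eq_getElem _ _ (by simpa using i.isLt), List.getElem_ofFn]
  simp
  rfl


lemma UB {n m r : ℕ} (Y : Matrix (Fin n) (Fin m) ℝ) (hr1 : 1 ≤ r) (hm : r ≤ m)
    (σ : Equiv.Perm (Fin m)) (hanti : Antitone fun j => ev Y (σ j))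
    (M : Matrix (Fin n) (Fin m) ℝ) (hrank : M.rank ≤ r) :
    ip M Y - 2⁻¹ * fro M ^ 2 ≤ 2⁻¹ * ∑ i : Fin r, ev Y (σ (Fin.castLE hm i)) := by
  classical
  obtain ⟨d, w, hd, hortho, hexp⟩ := exists_onfamily M
  have hdr : (d : ℝ) ≤ (r : ℝ) := by exact_mod_cast hd ▸ hrank
  set c : Fin n → Fin d → ℝ := fun i k => w k ⬝ᵥ M i with hc
  have hM : ∀ i j, M i j = ∑ k, c i k * w k j := by
    intro i j
    conv_lhs => rw [hexp i]
    simp [Finset.sum_apply, hc]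
  -- (1) ip
  have h1 : ip M Y = ∑ k, ∑ i, c i k * (Y *ᵥ w k) i := by
    unfold ip
    have e1 : ∀ i, ∑ j, M i j * Y i j = ∑ k, c i k * (Y *ᵥ w k) i := by
      intro i
      have : ∀ j, M i j * Y i j = ∑ k, c i k * (w k j * Y i j) := by
        intro j
        rw [hM i j, Finset.sum_mul]
        exact Finset.sum_congr rfl fun k _ => by ring
      simp only [this]
      rw [Finset.sum_comm]
      refine Finset.sum_congr rfl fun k _ => ?_
      simp only [Matrix.mulVec, dotProduct, Finset.mul_sum]
      exact Finset.sum_congr rfl fun j _ => by ring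
    rw [Finset.sum_congr rfl fun i _ => e1 i, Finset.sum_comm]
  -- (2) fro
  have h2 : fro M ^ 2 = ∑ i, ∑ k, c i k ^ 2 := by
    unfold fro
    rw [Real.sq_sqrt (by positivity)]
    refine Finset.sum_congr rfl fun i _ => ?_
    have e : ∀ j, M i j ^ 2 = ∑ k, ∑ l, (c i k * c i l) * (w k j * w l j) := by
      intro j
      rw [hM i j, sq, Finset.sum_mul_sum]
      exact Finset.sum_congr rfl fun k _ => Finset.sum_congr rfl fun l _ => by ring
    simp only [e]
    rw [Finset.sum_comm]
    refine Finset.sum_congr rfl fun k _ => ?_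
    rw [Finset.sum_comm]
    have e2 : ∀ l, ∑ j, (c i k * c i l) * (w k j * w l j) = (c i k * c i l) * (w k ⬝ᵥ w l) := by
      intro l
      rw [dotProduct, Finset.mul_sum]
    simp only [e2, hortho]
    simp [sq]
  -- (3) complete the square
  set β : Fin m → Fin d → ℝ := fun j k => evec Y j ⬝ᵥ w k with hβ
  set t : Fin m → ℝ := fun j => ∑ k, β j k ^ 2 with ht
  have h3 : ip M Y - 2⁻¹ * fro M ^ 2 ≤ 2⁻¹ * ∑ j, ev Y j * t j := by
    have hsq : ∀ k, ∑ i, (Y *ᵥ w k) i ^ 2 = ∑ j, ev Y j * β j k ^ 2 := by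
      intro k
      have : ∑ i, (Y *ᵥ w k) i ^ 2 = (Y *ᵥ w k) ⬝ᵥ (Y *ᵥ w k) := by
        rw [dotProduct]; exact Finset.sum_congr rfl fun i _ => (sq _)
      rw [this, quadform, quad_expand]
    have step : ∀ k, ∑ i, c i k * (Y *ᵥ w k) i - 2⁻¹ * ∑ i, c i k ^ 2
        ≤ 2⁻¹ * ∑ j, ev Y j * β j k ^ 2 := by
      intro k
      rw [← hsq k]
      have : ∑ i, c i k * (Y *ᵥ w k) i - 2⁻¹ * ∑ i, c i k ^ 2
          = ∑ i, (c i k * (Y *ᵥ w k) i - 2⁻¹ * c i k ^ 2) := by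
        rw [Finset.sum_sub_distrib, Finset.mul_sum]
      rw [this, Finset.mul_sum]
      refine Finset.sum_le_sum fun i _ => ?_
      nlinarith [sq_nonneg (c i k - (Y *ᵥ w k) i)]
    have hsum := Finset.sum_le_sum (fun k (_ : k ∈ Finset.univ) => step k)
    rw [h1, h2, Finset.sum_comm (f := fun i k => c i k ^ 2)]
    have expand : ∑ k, (∑ i, c i k * (Y *ᵥ w k) i - 2⁻¹ * ∑ i, c i k ^ 2)
        = ∑ k, ∑ i, c i k * (Y *ᵥ w k) i - 2⁻¹ * ∑ k, ∑ i, c i k ^ 2 := by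
      rw [Finset.sum_sub_distrib, Finset.mul_sum]
    have expand2 : ∑ k, 2⁻¹ * ∑ j, ev Y j * β j k ^ 2
        = 2⁻¹ * ∑ j, ev Y j * t j := by
      rw [← Finset.mul_sum, Finset.sum_comm]
      congr 1
      refine Finset.sum_congr rfl fun j _ => ?_
      rw [ht, Finset.mul_sum]
    rw [expand, expand2] at hsum
    exact hsum
  -- (4) bounds on t
  have ht0 : ∀ j, 0 ≤ t j := fun j => Finset.sum_nonneg fun k _ => sq_nonneg _
  have ht1 : ∀ j, t j ≤ 1 := by
    intro j
    set z : Fin m → ℝ := evec Y j - ∑ k, β j k • w k with hz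
    have hzz : 0 ≤ z ⬝ᵥ z := Finset.sum_nonneg fun i _ => mul_self_nonneg _
    have dsum : ∀ (x : Fin m → ℝ) (g : Fin d → Fin m → ℝ), x ⬝ᵥ (∑ k, g k) = ∑ k, x ⬝ᵥ g k := by
      intro x g
      simp only [dotProduct, Finset.sum_apply, Finset.mul_sum]
      exact Finset.sum_comm
    have dsum' : ∀ (x : Fin m → ℝ) (g : Fin d → Fin m → ℝ), (∑ k, g k) ⬝ᵥ x = ∑ k, g k ⬝ᵥ x := by
      intro x g
      rw [dotProduct_comm, dsum]
      exact Finset.sum_congr rfl fun k _ => dotProduct_comm _ _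
    have hexpand : z ⬝ᵥ z = 1 - t j := by
      rw [hz, sub_dotProduct, dotProduct_sub, dotProduct_sub]
      have e1 : evec Y j ⬝ᵥ evec Y j = 1 := by rw [evec_dot]; simp
      have e2 : evec Y j ⬝ᵥ (∑ k, β j k • w k) = t j := by
        rw [dsum]
        refine Finset.sum_congr rfl fun k _ => ?_
        rw [dotProduct_smul, smul_eq_mul, sq]
      have e3 : (∑ k, β j k • w k) ⬝ᵥ evec Y j = t j := by
        rw [dotProduct_comm]; exact e2
      have e4 : (∑ k, β j k • w k) ⬝ᵥ (∑ k, β j k • w k) = t j := by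
        rw [dsum']
        have e5 : ∀ k, (β j k • w k) ⬝ᵥ (∑ l, β j l • w l) = β j k ^ 2 := by
          intro k
          rw [dsum]
          have e6 : ∀ l, (β j k • w k) ⬝ᵥ (β j l • w l) = (β j k * β j l) * (if k = l then 1 else 0) := by
            intro l
            rw [smul_dotProduct, dotProduct_smul, ← hortho k l]
            simp [mul_assoc]
          simp only [e6]
          simp [sq]
        simp only [e5]
        rfl
      rw [e1, e2, e3, e4]
      ring
    linarith
  have htsum : ∑ j, t j ≤ (r : ℝ) := by
    have : ∑ j, t j = ∑ k, ∑ j, β j k ^ 2 := Finset.sum_comm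
    rw [this]
    have e : ∀ k : Fin d, ∑ j, β j k ^ 2 = (1 : ℝ) := by
      intro k
      have := parseval_dot Y (w k)
      rw [hortho k k] at this
      simpa using this
    simp only [e]
    simpa using hdr
  -- (5) combinatorial bound after reindexing by σ
  have hre : ∑ j, ev Y j * t j = ∑ j, t (σ j) * ev Y (σ j) := by
    rw [← Equiv.sum_comp σ (fun j => ev Y j * t j)]
    exact Finset.sum_congr rfl fun j _ => by ring
  have hcomb := comb hr1 hm (fun j => ev Y (σ j)) (fun j => t (σ j)) hanti
    (fun j => ev_nonneg Y _) (fun j => ht0 _) (fun j => ht1 _)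
    (by show (∑ j, t (σ j)) ≤ (r:ℝ); rw [Equiv.sum_comp σ t]; exact htsum)
  have : ip M Y - 2⁻¹ * fro M ^ 2 ≤ 2⁻¹ * ∑ j, t (σ j) * ev Y (σ j) := by
    rw [← hre]; exact h3
  calc ip M Y - 2⁻¹ * fro M ^ 2 ≤ 2⁻¹ * ∑ j, t (σ j) * ev Y (σ j) := this
    _ ≤ 2⁻¹ * ∑ i : Fin r, ev Y (σ (Fin.castLE hm i)) := by linarith


lemma EX {n m r : ℕ} (Y : Matrix (Fin n) (Fin m) ℝ) (hm : r ≤ m) (σ : Equiv.Perm (Fin m)) :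
    ∃ M : Matrix (Fin n) (Fin m) ℝ, M.rank ≤ r ∧
      ip M Y = ∑ i : Fin r, ev Y (σ (Fin.castLE hm i)) ∧
      fro M ^ 2 = ∑ i : Fin r, ev Y (σ (Fin.castLE hm i)) := by
  classical
  set e : Fin r → Fin m := fun i => σ (Fin.castLE hm i) with he
  have hinj : Function.Injective e := fun a b hab => by
    have := σ.injective hab
    exact Fin.castLE_injective hm this
  set B : Matrix (Fin m) (Fin r) ℝ := Matrix.of (fun l i => evec Y (e i) l) with hB
  set M : Matrix (Fin n) (Fin m) ℝ := Y * (B * Bᵀ) with hMdef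
  set A : Fin r → Fin n → ℝ := fun k => Y *ᵥ evec Y (e k) with hA
  have hMij : ∀ i j, M i j = ∑ k, A k i * evec Y (e k) j := by
    intro i j
    rw [hMdef, ← Matrix.mul_assoc]
    rw [Matrix.mul_apply]
    refine Finset.sum_congr rfl fun k _ => ?_
    congr 1
  have hAA : ∀ k, ∑ i, A k i * A k i = ev Y (e k) := fun k => quad_eigen Y (e k)
  have horth : ∀ k l, evec Y (e k) ⬝ᵥ evec Y (e l) = if k = l then 1 else 0 := by
    intro k l
    rw [evec_dot]
    by_cases h : k = l
    · simp [h]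
    · have : e k ≠ e l := fun hc => h (hinj hc)
      simp [h, this]
  refine ⟨M, ?_, ?_, ?_⟩
  · rw [hMdef, ← Matrix.mul_assoc]
    exact le_trans (Matrix.rank_mul_le_left (Y * B) Bᵀ) (le_trans
      (Matrix.rank_le_card_width (Y * B)) (by simp))
  · unfold ip
    have e1 : ∀ i, ∑ j, M i j * Y i j = ∑ k, A k i * A k i := by
      intro i
      have : ∀ j, M i j * Y i j = ∑ k, A k i * (evec Y (e k) j * Y i j) := by
        intro j
        rw [hMij i j, Finset.sum_mul]
        exact Finset.sum_congr rfl fun k _ => by ring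
      simp only [this]
      rw [Finset.sum_comm]
      refine Finset.sum_congr rfl fun k _ => ?_
      have : A k i * A k i = A k i * ∑ j, Y i j * evec Y (e k) j := rfl
      rw [this, Finset.mul_sum]
      exact Finset.sum_congr rfl fun j _ => by ring
    simp only [e1]
    rw [Finset.sum_comm]
    exact Finset.sum_congr rfl fun k _ => hAA k
  · unfold fro
    rw [Real.sq_sqrt (by positivity)]
    have e1 : ∀ i, ∑ j, M i j ^ 2 = ∑ k, A k i * A k i := by
      intro i
      have e2 : ∀ j, M i j ^ 2 = ∑ k, ∑ l, (A k i * A l i) * (evec Y (e k) j * evec Y (e l) j) := by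
        intro j
        rw [hMij i j, sq, Finset.sum_mul_sum]
        exact Finset.sum_congr rfl fun k _ => Finset.sum_congr rfl fun l _ => by ring
      simp only [e2]
      rw [Finset.sum_comm]
      refine Finset.sum_congr rfl fun k _ => ?_
      rw [Finset.sum_comm]
      have e3 : ∀ l, ∑ j, (A k i * A l i) * (evec Y (e k) j * evec Y (e l) j)
          = (A k i * A l i) * (if k = l then 1 else 0) := by
        intro l
        rw [← horth k l, dotProduct, Finset.mul_sum]
      simp only [e3]
      simp
    simp only [e1]
    rw [Finset.sum_comm]
    exact Finset.sum_congr rfl fun k _ => hAA k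


lemma exists_perm_sv' {n m : ℕ} (Y : Matrix (Fin n) (Fin m) ℝ) {r : ℕ} (hm : r ≤ m) :
    ∃ σ : Equiv.Perm (Fin m),
      (∑ i ∈ Finset.range r, sv Y i ^ 2 = ∑ i : Fin r, ev Y (σ (Fin.castLE hm i))) ∧
      Antitone (fun j => ev Y (σ j)) := by
  obtain ⟨σ, hsv, hant⟩ := exists_perm_sv Y
  refine ⟨σ, ?_, ?_⟩
  · rw [Finset.sum_range]
    refine Finset.sum_congr rfl fun i _ => ?_
    have h1 : sv Y ((Fin.castLE hm i) : Fin m).val = Real.sqrt (ev Y (σ (Fin.castLE hm i))) :=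
      hsv (Fin.castLE hm i)
    have h2 : ((Fin.castLE hm i) : Fin m).val = (i : ℕ) := rfl
    rw [h2] at h1
    rw [h1, Real.sq_sqrt (ev_nonneg Y _)]
  · intro a b hab
    have h1 := hant hab
    have ha := ev_nonneg Y (σ a)
    have hb := ev_nonneg Y (σ b)
    have sa := Real.sq_sqrt ha
    have sb := Real.sq_sqrt hb
    have h0 : 0 ≤ Real.sqrt (ev Y (σ b)) := Real.sqrt_nonneg _
    nlinarith


/-- the Fenchel conjugate of `f(M) = ½‖M‖_F² + χ_{rank M ≤ r}(M)` is
`f*(Y) = ½ Σ_{i=1}^r σᵢ(Y)² = ½‖Y‖_{F,r}²`. -/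
theorem conjugate_fRank_eq_half_sq_truncFro {n m r : ℕ} (hr1 : 1 ≤ r) (hr2 : r ≤ min n m)
    (Y : Matrix (Fin n) (Fin m) ℝ) :
    fconj (fRank r) Y = ((2⁻¹ * ∑ i ∈ Finset.range r, sv Y i ^ 2 : ℝ) : EReal) ∧
    fconj (fRank r) Y = ((2⁻¹ * truncFro r Y ^ 2 : ℝ) : EReal) := by
  have hm : r ≤ m := le_trans hr2 (min_le_right n m)
  obtain ⟨σ, hsum, hanti⟩ := exists_perm_sv' Y hm
  set S : ℝ := ∑ i : Fin r, ev Y (σ (Fin.castLE hm i)) with hS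
  have hub : ∀ M, ((ip M Y : ℝ) : EReal) - fRank r M ≤ ((2⁻¹ * S : ℝ) : EReal) := by
    intro M
    unfold fRank
    by_cases h : M.rank ≤ r
    · rw [if_pos h, ← EReal.coe_sub, EReal.coe_le_coe_iff]
      have := UB Y hr1 hm σ hanti M h
      linarith
    · rw [if_neg h, EReal.sub_top]
      exact bot_le
  have hge : ((2⁻¹ * S : ℝ) : EReal) ≤ fconj (fRank r) Y := by
    obtain ⟨M, hrank, hip, hfro⟩ := EX Y hm σ
    have heq : ((ip M Y : ℝ) : EReal) - fRank r M = ((2⁻¹ * S : ℝ) : EReal) := by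
      unfold fRank
      rw [if_pos hrank, ← EReal.coe_sub]
      exact congrArg _ (by rw [hip, hfro, ← hS]; ring)
    rw [← heq]
    exact le_iSup (fun M => ((ip M Y : ℝ) : EReal) - fRank r M) M
  have h1 : fconj (fRank r) Y = ((2⁻¹ * S : ℝ) : EReal) := le_antisymm (iSup_le hub) hge
  constructor
  · rw [h1]
    exact congrArg _ (by rw [hsum])
  · rw [h1]
    have ht : truncFro r Y ^ 2 = ∑ i ∈ Finset.range r, sv Y i ^ 2 := by
      unfold truncFro
      exact Real.sq_sqrt (by positivity)
    exact congrArg _ (by rw [ht, hsum])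
end
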